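/- arXiv:1312.0534 — 10 statements merged into one kernel-verified Lean document; each statement's English description precedes it below -/
import Mathlib

section
/- Let X be a real Hilbert space, let C be a nonempty closed convex subset of X, let β ≥ 0, and set D := C_{[β]}. Then for every x ∈ X: if d_C(x) ≤ β then P_D x = x, and otherwise P_D x = P_C x + β·(x − P_C x)/d_C(x). -/
/-- Uniqueness of nearest point to a convex set. -/
lemma nearest_point_unique
    {X : Type*} [NormedAddCommGroup X] [InnerProductSpace ℝ X]
    {D : Set X} (hconv : Convex ℝ D) {x p q : X} (hp : p ∈ D) (hq : q ∈ D)
    (hdp : dist x p = Metric.infDist x D) (hdq : dist x q = Metric.infDist x D) :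
    p = q := by
  set m := (1/2:ℝ) • p + (1/2:ℝ) • q with hm
  have hmD : m ∈ D := hconv hp hq (by norm_num) (by norm_num) (by norm_num)
  have hle : Metric.infDist x D ≤ dist x m := Metric.infDist_le_dist_of_mem hmD
  have hpar := parallelogram_law_with_norm ℝ (x - p) (x - q)
  have h1 : (x - p) + (x - q) = (2 : ℝ) • (x - m) := by
    rw [hm]; module
  have h2 : (x - p) - (x - q) = q - p := by abel
  rw [h1, h2, norm_smul] at hpar
  have hnp : ‖x - p‖ = Metric.infDist x D := by rw [← hdp, dist_eq_norm]
  have hnq : ‖x - q‖ = Metric.infDist x D := by rw [← hdq, dist_eq_norm]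
  have hnm : Metric.infDist x D ≤ ‖x - m‖ := by rwa [dist_eq_norm] at hle
  have h0 : 0 ≤ Metric.infDist x D := hnp ▸ norm_nonneg _
  have : ‖q - p‖ = 0 := by
    simp only [Real.norm_ofNat] at hpar
    nlinarith [norm_nonneg (q - p), norm_nonneg (x - m)]
  exact (sub_eq_zero.mp (norm_eq_zero.mp this)).symm

/-- projection onto an enlargement.
Let `X` be a real Hilbert space, `C` a nonempty closed convex subset, `β ≥ 0`,
and `D := C_[β] = {x : d_C(x) ≤ β}`.  Let `P_C` and `P_D` be the metric
projections onto `C` and `D`.  Then for every `x`: if `d_C(x) ≤ β` then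
`P_D x = x`, and otherwise `P_D x = P_C x + β (x − P_C x)/d_C(x)`. -/
theorem projection_onto_enlargement
    {X : Type*} [NormedAddCommGroup X] [InnerProductSpace ℝ X] [CompleteSpace X]
    (C : Set X) (hCne : C.Nonempty) (hCcl : IsClosed C) (hCconv : Convex ℝ C)
    (β : ℝ) (hβ : 0 ≤ β)
    (D : Set X) (hD : D = {x : X | Metric.infDist x C ≤ β})
    (PC : X → X) (hPC : ∀ x : X, PC x ∈ C ∧ dist x (PC x) = Metric.infDist x C)
    (PD : X → X) (hPD : ∀ x : X, PD x ∈ D ∧ dist x (PD x) = Metric.infDist x D) :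
    ∀ x : X,
      (Metric.infDist x C ≤ β → PD x = x) ∧
      (β < Metric.infDist x C →
        PD x = PC x + (β / Metric.infDist x C) • (x - PC x)) := by
  have hDconv : Convex ℝ D := by
    rw [hD]
    intro a ha b hb s t hs ht hst
    simp only [Set.mem_setOf_eq] at *
    have ha' := (hPC a).1
    have hb' := (hPC b).1
    have : Metric.infDist (s • a + t • b) C ≤ dist (s • a + t • b) (s • PC a + t • PC b) :=
      Metric.infDist_le_dist_of_mem (hCconv ha' hb' hs ht hst)
    refine this.trans ?_
    rw [dist_eq_norm]
    have : s • a + t • b - (s • PC a + t • PC b) = s • (a - PC a) + t • (b - PC b) := by module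
    rw [this]
    calc ‖s • (a - PC a) + t • (b - PC b)‖ ≤ s * ‖a - PC a‖ + t * ‖b - PC b‖ := by
          refine (norm_add_le _ _).trans ?_
          rw [norm_smul, norm_smul, Real.norm_eq_abs, Real.norm_eq_abs, abs_of_nonneg hs,
            abs_of_nonneg ht]
      _ ≤ s * β + t * β := by
          have h1 : ‖a - PC a‖ ≤ β := by rw [← dist_eq_norm]; rw [(hPC a).2]; exact ha
          have h2 : ‖b - PC b‖ ≤ β := by rw [← dist_eq_norm]; rw [(hPC b).2]; exact hb
          gcongr
      _ = β := by rw [← add_mul, hst, one_mul]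
  intro x
  constructor
  · intro hx
    have hxD : x ∈ D := by rw [hD]; exact hx
    have h0 : Metric.infDist x D = 0 := by
      have h1 := Metric.infDist_le_dist_of_mem (x := x) hxD
      rw [dist_self] at h1
      exact le_antisymm h1 Metric.infDist_nonneg
    have := (hPD x).2
    rw [h0] at this
    exact (dist_eq_zero.mp this).symm
  · intro hx
    set d := Metric.infDist x C with hd
    have hd0 : 0 < d := lt_of_le_of_lt hβ hx
    set y := PC x + (β / d) • (x - PC x) with hy
    have hxPC : ‖x - PC x‖ = d := by rw [← dist_eq_norm, (hPC x).2]
    have hyD : y ∈ D := by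
      rw [hD]
      have : Metric.infDist y C ≤ dist y (PC x) := Metric.infDist_le_dist_of_mem (hPC x).1
      refine this.trans_eq ?_
      rw [dist_eq_norm, hy]
      have : PC x + (β / d) • (x - PC x) - PC x = (β / d) • (x - PC x) := by module
      rw [this, norm_smul, Real.norm_eq_abs, abs_of_nonneg (by positivity), hxPC]
      field_simp
    have hdistxy : dist x y = d - β := by
      rw [dist_eq_norm, hy]
      have : x - (PC x + (β / d) • (x - PC x)) = (1 - β / d) • (x - PC x) := by module
      rw [this, norm_smul, Real.norm_eq_abs, hxPC,
        abs_of_nonneg (by rw [sub_nonneg]; exact (div_le_one hd0).mpr hx.le)]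
      field_simp
    have hinfD : Metric.infDist x D = d - β := by
      apply le_antisymm
      · exact hdistxy ▸ Metric.infDist_le_dist_of_mem hyD
      · have hDne : D.Nonempty := ⟨y, hyD⟩
        have := hDne.to_subtype
        rw [Metric.infDist_eq_iInf]
        refine le_ciInf fun z' => ?_
        obtain ⟨z, hz⟩ := z'
        simp only []
        have hz' : Metric.infDist z C ≤ β := by rw [hD] at hz; exact hz
        have := Metric.infDist_le_infDist_add_dist (x := x) (y := z) (s := C)
        rw [← hd] at this
        linarith
    exact nearest_point_unique hDconv (hPD x).1 hyD ((hPD x).2) (hdistxy.trans hinfD.symm)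
end

section
/- Let X be a real Hilbert space, let Z be a nonempty closed convex subset of X, let β > 0, set C := Z_{[β]}, and let Q be the intrepid projector onto C with respect to Z and β. Then for every x ∈ X, Qx lies on the line segment [x, P_Z x] and Qx ∈ C. -/
/-- intrepid projector: range property.
Let `X` be a real Hilbert space, `Z` a nonempty closed convex subset, `β > 0`,
`C := Z_[β]`, and `Q` the intrepid projector onto `C` (w.r.t. `Z` and `β`).
Then for every `x`, `Qx` lies on the segment `[x, P_Z x]` and `Qx ∈ C`. -/
theorem intrepid_projector_segment_and_membership
    {X : Type*} [NormedAddCommGroup X] [InnerProductSpace ℝ X] [CompleteSpace X]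
    (Z : Set X) (hZne : Z.Nonempty) (hZcl : IsClosed Z) (hZconv : Convex ℝ Z)
    (β : ℝ) (hβ : 0 < β)
    (PZ : X → X) (hPZ : ∀ x : X, PZ x ∈ Z ∧ dist x (PZ x) = Metric.infDist x Z)
    (C : Set X) (hC : C = {x : X | Metric.infDist x Z ≤ β})
    (Q : X → X)
    (hQ₁ : ∀ x : X, 2 * β ≤ Metric.infDist x Z → Q x = PZ x)
    (hQ₂ : ∀ x : X, Metric.infDist x Z ≤ β → Q x = x)
    (hQ₃ : ∀ x : X, β < Metric.infDist x Z → Metric.infDist x Z < 2 * β →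
      Q x = x + (1 - Metric.infDist x Z / β) • (x - PZ x)) :
    ∀ x : X, Q x ∈ segment ℝ x (PZ x) ∧ Q x ∈ C := by
  intro x
  obtain ⟨hPmem, hPdist⟩ := hPZ x
  set d := Metric.infDist x Z with hd
  have hPinf : Metric.infDist (PZ x) Z = 0 := by
    rw [Metric.infDist_zero_of_mem hPmem]
  rcases le_or_gt d β with h1 | h1
  · rw [hQ₂ x h1]
    exact ⟨left_mem_segment ℝ x (PZ x), by rw [hC]; exact h1⟩
  rcases le_or_gt (2 * β) d with h2 | h2
  · rw [hQ₁ x h2]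
    exact ⟨right_mem_segment ℝ x (PZ x), by rw [hC]; simp [hPinf, hβ.le]⟩
  · rw [hQ₃ x h1 h2]
    have hdβ : d / β < 2 := by
      rw [div_lt_iff₀ hβ]; linarith
    have hdβ1 : 1 ≤ d / β := by
      rw [le_div_iff₀ hβ]; linarith
    constructor
    · refine ⟨2 - d / β, d / β - 1, by linarith, by linarith, by ring, ?_⟩
      module
    · rw [hC]
      have key : x + (1 - d / β) • (x - PZ x) - PZ x = (2 - d / β) • (x - PZ x) := by
        module
      have hnorm : dist (x + (1 - d / β) • (x - PZ x)) (PZ x) = (2 - d / β) * d := by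
        rw [dist_eq_norm, key, norm_smul, Real.norm_eq_abs,
          abs_of_pos (by linarith : (0:ℝ) < 2 - d / β), ← dist_eq_norm, hPdist]
      have := Metric.infDist_le_dist_of_mem (x := x + (1 - d / β) • (x - PZ x)) hPmem
      rw [hnorm] at this
      refine this.trans ?_
      have hd0 : 0 < d := lt_trans hβ h1
      have hdb : d / β * β = d := div_mul_cancel₀ _ hβ.ne'
      nlinarith [sq_nonneg (d - β), mul_pos hd0 hβ]
end

section
/- Let X be a real Hilbert space, let Z be a nonempty closed convex subset of X, let β > 0, set C := Z_{[β]}, and let Q be the intrepid projector onto C with respect to Z and β. Let α ∈ [0, β], let y ∈ Z_{[α]}, and let x ∈ X with d_Z(x) ≥ 2β. Then ‖x − y‖² − ‖Qx − y‖² ≥ 2(β−α)‖x − Qx‖, where ‖x − Qx‖ = d_Z(x) = β + d_C(x); consequently ‖x − y‖² − ‖Qx − y‖² ≥ 4β(β−α). -/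
open RealInnerProductSpace


/-- intrepid projector: projection step.
Let `X` be a real Hilbert space, `Z` nonempty closed convex, `β > 0`,
`C := Z_[β]`, `Q` the intrepid projector onto `C`.  Let `α ∈ [0,β]`,
`y ∈ Z_[α]`, and `x ∈ X` with `d_Z(x) ≥ 2β`.  Then
`‖x − y‖² − ‖Qx − y‖² ≥ 2(β−α)‖x − Qx‖`, where
`‖x − Qx‖ = d_Z(x) = β + d_C(x)`; consequently
`‖x − y‖² − ‖Qx − y‖² ≥ 4β(β−α)`. -/
theorem intrepid_projector_projection_case
    {X : Type*} [NormedAddCommGroup X] [InnerProductSpace ℝ X] [CompleteSpace X]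
    (Z : Set X) (hZne : Z.Nonempty) (hZcl : IsClosed Z) (hZconv : Convex ℝ Z)
    (β : ℝ) (hβ : 0 < β)
    (PZ : X → X) (hPZ : ∀ x : X, PZ x ∈ Z ∧ dist x (PZ x) = Metric.infDist x Z)
    (C : Set X) (hC : C = {x : X | Metric.infDist x Z ≤ β})
    (Q : X → X)
    (hQ₁ : ∀ x : X, 2 * β ≤ Metric.infDist x Z → Q x = PZ x)
    (hQ₂ : ∀ x : X, Metric.infDist x Z ≤ β → Q x = x)
    (hQ₃ : ∀ x : X, β < Metric.infDist x Z → Metric.infDist x Z < 2 * β →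
      Q x = x + (1 - Metric.infDist x Z / β) • (x - PZ x))
    (α : ℝ) (hα : α ∈ Set.Icc (0 : ℝ) β)
    (y : X) (hy : Metric.infDist y Z ≤ α)
    (x : X) (hx : 2 * β ≤ Metric.infDist x Z) :
    ‖x - y‖ ^ 2 - ‖Q x - y‖ ^ 2 ≥ 2 * (β - α) * ‖x - Q x‖ ∧
    ‖x - Q x‖ = Metric.infDist x Z ∧
    Metric.infDist x Z = β + Metric.infDist x C ∧
    ‖x - y‖ ^ 2 - ‖Q x - y‖ ^ 2 ≥ 4 * β * (β - α) := by
  obtain ⟨hα0, hαβ⟩ := hα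
  set d := Metric.infDist x Z with hd
  set p := PZ x with hp
  obtain ⟨hpZ, hpd⟩ := hPZ x
  have hQx : Q x = p := hQ₁ x hx
  have hxp : ‖x - p‖ = d := by rw [← dist_eq_norm]; exact hpd
  have hd0 : 0 < d := lt_of_lt_of_le (by linarith) hx
  -- variational inequality
  have hvar : ∀ w ∈ Z, (inner (𝕜 := ℝ) (x - p) (w - p) : ℝ) ≤ 0 := by
    refine (norm_eq_iInf_iff_real_inner_le_zero hZconv hpZ).mp ?_
    rw [hxp, hd, Metric.infDist_eq_iInf]
    simp only [dist_eq_norm]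
  -- nearest point to y
  obtain ⟨hzZ, hzd⟩ := hPZ y
  set z := PZ y with hz
  have hyz : ‖y - z‖ ≤ α := by rw [← dist_eq_norm]; rw [hzd]; exact hy
  -- main expansion
  have hexp : ‖x - y‖ ^ 2 - ‖p - y‖ ^ 2 = ‖x - p‖ ^ 2 + 2 * (inner (𝕜 := ℝ) (x - p) (p - y) : ℝ) := by
    have : x - y = (x - p) + (p - y) := by abel
    rw [this, @norm_add_sq_real]
    ring
  have hinner : (inner (𝕜 := ℝ) (x - p) (p - y) : ℝ) ≥ -(‖x - p‖ * α) := by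
    have h1 : (inner (𝕜 := ℝ) (x - p) (p - y) : ℝ) = -(inner (𝕜 := ℝ) (x - p) (z - p) : ℝ) + (inner (𝕜 := ℝ) (x - p) (z - y) : ℝ) := by
      rw [← inner_neg_right, ← inner_add_right]
      congr 1
      abel
    have h2 : (inner (𝕜 := ℝ) (x - p) (z - p) : ℝ) ≤ 0 := hvar z hzZ
    have h3 : (inner (𝕜 := ℝ) (x - p) (z - y) : ℝ) ≥ -(‖x - p‖ * ‖z - y‖) := by
      have := abs_real_inner_le_norm (x - p) (z - y)
      have := neg_abs_le (inner (𝕜 := ℝ) (x - p) (z - y) : ℝ)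
      linarith
    have h4 : ‖z - y‖ ≤ α := by rw [norm_sub_rev]; exact hyz
    nlinarith [norm_nonneg (x - p)]
  have hmain : ‖x - y‖ ^ 2 - ‖p - y‖ ^ 2 ≥ ‖x - p‖ ^ 2 - 2 * α * ‖x - p‖ := by
    rw [hexp]; nlinarith
  have hnorm : ‖x - p‖ ≥ 2 * β := hxp ▸ hx
  -- distance to C
  have hdC : d = β + Metric.infDist x C := by
    have hle : Metric.infDist x C ≤ d - β := by
      set t : ℝ := (d - β) / d
      have ht0 : 0 ≤ t := div_nonneg (by linarith) hd0.le
      have ht1 : t ≤ 1 := by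
        rw [div_le_one hd0]; linarith
      set w : X := x + t • (p - x) with hw
      have hwC : w ∈ C := by
        rw [hC]
        have hwp : ‖w - p‖ = (1 - t) * d := by
          have : w - p = (1 - t) • (x - p) := by
            rw [hw]; module
          rw [this, norm_smul, hxp, Real.norm_eq_abs, abs_of_nonneg (by linarith)]
        have : Metric.infDist w Z ≤ ‖w - p‖ := by
          rw [← dist_eq_norm]; exact Metric.infDist_le_dist_of_mem hpZ
        have h1t : (1 - t) * d = β := by
          have : t = (d - β) / d := rfl
          rw [this]
          field_simp
          ring
        simp only [Set.mem_setOf_eq]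
        rw [hwp, h1t] at this
        exact this
      have hxw : dist x w = d - β := by
        rw [dist_eq_norm]
        have : x - w = (-t) • (p - x) := by rw [hw]; module
        rw [this, norm_smul, Real.norm_eq_abs, abs_neg, abs_of_nonneg ht0, norm_sub_rev, hxp]
        have : t = (d - β) / d := rfl
        rw [this]
        field_simp
      calc Metric.infDist x C ≤ dist x w := Metric.infDist_le_dist_of_mem hwC
        _ = d - β := hxw
    have hge : d - β ≤ Metric.infDist x C := by
      have hCne : C.Nonempty := by
        obtain ⟨c, hc⟩ := hZne
        refine ⟨c, ?_⟩
        rw [hC]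
        simp only [Set.mem_setOf_eq]
        rw [Metric.infDist_zero_of_mem hc]
        exact hβ.le
      by_contra h
      push_neg at h
      obtain ⟨c, hcC, hcd⟩ := (Metric.infDist_lt_iff hCne).mp h
      have hcZ : Metric.infDist c Z ≤ β := by rw [hC] at hcC; exact hcC
      have : d ≤ dist x c + Metric.infDist c Z := by
        rw [hd]
        calc Metric.infDist x Z ≤ Metric.infDist c Z + dist x c :=
              Metric.infDist_le_infDist_add_dist
          _ = dist x c + Metric.infDist c Z := by ring
      linarith
    linarith
  refine ⟨?_, by rw [hQx]; exact hxp, hdC, ?_⟩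
  · rw [hQx]
    nlinarith
  · rw [hQx]
    nlinarith
end

section
/- Let X be a real Hilbert space, let Z be a nonempty closed convex subset of X, let β > 0, set C := Z_{[β]}, and let Q be the intrepid projector onto C with respect to Z and β. Let α ∈ [0, β], let y ∈ Z_{[α]}, and let x ∈ X with β < d_Z(x) < 2β. Then ‖x − y‖² − ‖Qx − y‖² ≥ 2(β−α)‖x − Qx‖, where ‖x − Qx‖ = (1/β)·d_Z(x)·(d_Z(x) − β) = (1/β)·d_C(x)·(β + d_C(x)). -/
open Metric
open scoped InnerProductSpace

/-- Variational inequality for a nearest point on a convex set. -/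
lemma nearest_inner_le_zero {X : Type*} [NormedAddCommGroup X] [InnerProductSpace ℝ X]
    {Z : Set X} (hZconv : Convex ℝ Z) {x p : X} (hp : p ∈ Z)
    (hd : dist x p = Metric.infDist x Z) :
    ∀ z ∈ Z, ⟪x - p, z - p⟫_ℝ ≤ 0 := by
  have h : ‖x - p‖ = ⨅ w : Z, ‖x - w‖ := by
    rw [← dist_eq_norm, hd, Metric.infDist_eq_iInf]
    simp_rw [dist_eq_norm]
  exact (norm_eq_iInf_iff_real_inner_le_zero hZconv hp).1 h

/-- intrepid projector: reflection step.
Let `X` be a real Hilbert space, `Z` nonempty closed convex, `β > 0`,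
`C := Z_[β]`, `Q` the intrepid projector onto `C`.  Let `α ∈ [0,β]`,
`y ∈ Z_[α]`, and `x ∈ X` with `β < d_Z(x) < 2β`.  Then
`‖x − y‖² − ‖Qx − y‖² ≥ 2(β−α)‖x − Qx‖`, where
`‖x − Qx‖ = (1/β) d_Z(x)(d_Z(x) − β) = (1/β) d_C(x)(β + d_C(x))`. -/
theorem intrepid_projector_reflection_case
    {X : Type*} [NormedAddCommGroup X] [InnerProductSpace ℝ X] [CompleteSpace X]
    (Z : Set X) (hZne : Z.Nonempty) (hZcl : IsClosed Z) (hZconv : Convex ℝ Z)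
    (β : ℝ) (hβ : 0 < β)
    (PZ : X → X) (hPZ : ∀ x : X, PZ x ∈ Z ∧ dist x (PZ x) = Metric.infDist x Z)
    (C : Set X) (hC : C = {x : X | Metric.infDist x Z ≤ β})
    (Q : X → X)
    (hQ₁ : ∀ x : X, 2 * β ≤ Metric.infDist x Z → Q x = PZ x)
    (hQ₂ : ∀ x : X, Metric.infDist x Z ≤ β → Q x = x)
    (hQ₃ : ∀ x : X, β < Metric.infDist x Z → Metric.infDist x Z < 2 * β →
      Q x = x + (1 - Metric.infDist x Z / β) • (x - PZ x))
    (α : ℝ) (hα : α ∈ Set.Icc (0 : ℝ) β)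
    (y : X) (hy : Metric.infDist y Z ≤ α)
    (x : X) (hx₁ : β < Metric.infDist x Z) (hx₂ : Metric.infDist x Z < 2 * β) :
    ‖x - y‖ ^ 2 - ‖Q x - y‖ ^ 2 ≥ 2 * (β - α) * ‖x - Q x‖ ∧
    ‖x - Q x‖ = (1 / β) * Metric.infDist x Z * (Metric.infDist x Z - β) ∧
    ‖x - Q x‖ = (1 / β) * Metric.infDist x C * (β + Metric.infDist x C) := by
  obtain ⟨hα0, hαβ⟩ := hα
  obtain ⟨hpZ, hpd⟩ := hPZ x
  obtain ⟨hqZ, hqd⟩ := hPZ y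
  have hQx := hQ₃ x hx₁ hx₂
  have hvar : ∀ z ∈ Z, ⟪x - PZ x, z - PZ x⟫_ℝ ≤ 0 :=
    nearest_inner_le_zero hZconv hpZ hpd
  set d : ℝ := Metric.infDist x Z with hd
  set p : X := PZ x with hp
  set q : X := PZ y with hq
  clear_value d p q
  clear hQ₁ hQ₂ hQ₃ hPZ
  have hxp : ‖x - p‖ = d := by rw [← dist_eq_norm]; exact hpd
  have hdpos : 0 < d := hβ.trans hx₁
  obtain ⟨t, ht⟩ : ∃ t : ℝ, t = d / β - 1 := ⟨_, rfl⟩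
  have htpos : 0 < t := by
    have h1 : 1 < d / β := (one_lt_div hβ).2 hx₁
    rw [ht]; linarith
  have hxQ : x - Q x = t • (x - p) := by
    rw [hQx, ht, show d / β - 1 = -(1 - d / β) by ring]
    module
  have hnormxQ : ‖x - Q x‖ = t * d := by
    rw [hxQ, norm_smul, Real.norm_eq_abs, abs_of_pos htpos, hxp]
  -- part 2
  have part2 : ‖x - Q x‖ = (1 / β) * d * (d - β) := by
    rw [hnormxQ, ht]; field_simp
  -- distance to C
  have hdC : Metric.infDist x C = d - β := by
    have hCne : C.Nonempty := by
      obtain ⟨z, hz⟩ := hZne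
      exact ⟨z, by simp [hC, Metric.infDist_zero_of_mem hz, hβ.le]⟩
    apply le_antisymm
    · -- witness c = p + (β/d) • (x - p)
      set c : X := p + (β / d) • (x - p) with hc
      have hcp : dist c p = β := by
        rw [dist_eq_norm, hc]
        simp only [add_sub_cancel_left, norm_smul, Real.norm_eq_abs,
          abs_of_pos (div_pos hβ hdpos), hxp]
        field_simp
      have hcC : c ∈ C := by
        rw [hC]
        have h2 := Metric.infDist_le_dist_of_mem hpZ (x := c)
        exact h2.trans_eq hcp
      have hxc : dist x c = d - β := by
        rw [dist_eq_norm, hc]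
        have he : x - (p + (β / d) • (x - p)) = (1 - β / d) • (x - p) := by module
        rw [he, norm_smul, Real.norm_eq_abs, hxp,
          abs_of_pos (by rw [sub_pos]; exact (div_lt_one hdpos).2 hx₁)]
        field_simp
      calc Metric.infDist x C ≤ dist x c := Metric.infDist_le_dist_of_mem hcC
        _ = d - β := hxc
    · by_contra h
      push_neg at h
      obtain ⟨c, hcC, hclt⟩ := (Metric.infDist_lt_iff hCne).1 h
      have hc2 : Metric.infDist c Z ≤ β := by rwa [hC] at hcC
      have h3 := Metric.infDist_le_infDist_add_dist (x := x) (y := c) (s := Z)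
      rw [← hd] at h3
      linarith
  -- part 3
  have part3 : ‖x - Q x‖ = (1 / β) * Metric.infDist x C * (β + Metric.infDist x C) := by
    rw [hdC, part2]; ring
  refine ⟨?_, part2, part3⟩
  -- main inequality
  have hyq : ‖y - q‖ ≤ α := by rw [← dist_eq_norm, hqd]; exact hy
  have hvq : ⟪x - p, q - p⟫_ℝ ≤ 0 := hvar q hqZ
  have hinner : ⟪x - y, x - p⟫_ℝ ≥ d ^ 2 - α * d := by
    have hsplit : ⟪x - y, x - p⟫_ℝ
        = ⟪x - p, x - p⟫_ℝ + ⟪q - y, x - p⟫_ℝ + ⟪p - q, x - p⟫_ℝ := by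
      rw [← inner_add_left, ← inner_add_left]
      congr 1
      module
    have h1 : ⟪x - p, x - p⟫_ℝ = d ^ 2 := by
      rw [real_inner_self_eq_norm_sq, hxp]
    have h2 : ⟪q - y, x - p⟫_ℝ ≥ -(α * d) := by
      have habs := abs_real_inner_le_norm (q - y) (x - p)
      have hn : ‖q - y‖ ≤ α := by rwa [norm_sub_rev]
      have hb : ‖q - y‖ * ‖x - p‖ ≤ α * d := by
        rw [hxp]; exact mul_le_mul hn le_rfl hdpos.le hα0
      have hneg := neg_abs_le (⟪q - y, x - p⟫_ℝ)
      linarith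
    have h3 : ⟪p - q, x - p⟫_ℝ ≥ 0 := by
      have he : ⟪x - p, q - p⟫_ℝ = -⟪p - q, x - p⟫_ℝ := by
        rw [real_inner_comm, show (q - p : X) = -(p - q) by module, inner_neg_left]
      linarith [he ▸ hvq]
    rw [ge_iff_le, hsplit]
    linarith
  have hQy : Q x - y = (x - y) - (x - Q x) := by module
  have hexp : ‖Q x - y‖ ^ 2
      = ‖x - y‖ ^ 2 - 2 * ⟪x - y, x - Q x⟫_ℝ + ‖x - Q x‖ ^ 2 := by
    rw [hQy, @norm_sub_sq_real]
  have hwin : ⟪x - y, x - Q x⟫_ℝ = t * ⟪x - y, x - p⟫_ℝ := by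
    rw [hxQ, inner_smul_right]
  rw [hexp, hwin, hnormxQ]
  have htd0 : 0 < t * d := mul_pos htpos hdpos
  have h2 : 2 * d - t * d - 2 * β ≥ 0 := by
    have he : 2 * d - t * d - 2 * β = (d - β) * (2 * β - d) / β := by
      rw [ht]; field_simp; ring
    rw [he]
    exact div_nonneg (mul_nonneg (by linarith) (by linarith)) hβ.le
  have hkey2 : t * d * (2 * d - t * d - 2 * β) ≥ 0 := mul_nonneg htd0.le h2
  have hIa : t * ⟪x - y, x - p⟫_ℝ ≥ t * (d ^ 2 - α * d) :=
    mul_le_mul_of_nonneg_left hinner htpos.le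
  nlinarith [hkey2, hIa]
end

section
/- Let X be a real Hilbert space, let Z be a nonempty closed convex subset of X, let β > 0, set C := Z_{[β]}, and let Q be the intrepid projector onto C with respect to Z and β. Then for every α ∈ [0, β], every y ∈ Z_{[α]}, and every x ∈ X, one has ‖x − y‖² − ‖Qx − y‖² ≥ 2(β−α)‖x − Qx‖ ≥ 2(β−α)·d_C(x). -/
/-- intrepid projector: master inequality.
Let `X` be a real Hilbert space, `Z` nonempty closed convex, `β > 0`,
`C := Z_[β]`, `Q` the intrepid projector onto `C`.  Then for every
`α ∈ [0,β]`, every `y ∈ Z_[α]`, and every `x ∈ X`,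
`‖x − y‖² − ‖Qx − y‖² ≥ 2(β−α)‖x − Qx‖ ≥ 2(β−α) d_C(x)`. -/
theorem intrepid_projector_master_inequality
    {X : Type*} [NormedAddCommGroup X] [InnerProductSpace ℝ X] [CompleteSpace X]
    (Z : Set X) (hZne : Z.Nonempty) (hZcl : IsClosed Z) (hZconv : Convex ℝ Z)
    (β : ℝ) (hβ : 0 < β)
    (PZ : X → X) (hPZ : ∀ x : X, PZ x ∈ Z ∧ dist x (PZ x) = Metric.infDist x Z)
    (C : Set X) (hC : C = {x : X | Metric.infDist x Z ≤ β})
    (Q : X → X)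
    (hQ₁ : ∀ x : X, 2 * β ≤ Metric.infDist x Z → Q x = PZ x)
    (hQ₂ : ∀ x : X, Metric.infDist x Z ≤ β → Q x = x)
    (hQ₃ : ∀ x : X, β < Metric.infDist x Z → Metric.infDist x Z < 2 * β →
      Q x = x + (1 - Metric.infDist x Z / β) • (x - PZ x)) :
    ∀ α ∈ Set.Icc (0 : ℝ) β, ∀ y : X, Metric.infDist y Z ≤ α → ∀ x : X,
      ‖x - y‖ ^ 2 - ‖Q x - y‖ ^ 2 ≥ 2 * (β - α) * ‖x - Q x‖ ∧
      2 * (β - α) * ‖x - Q x‖ ≥ 2 * (β - α) * Metric.infDist x C := by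
  rintro α ⟨hα0, hαβ⟩ y hy x
  obtain ⟨hpZ, hpd⟩ := hPZ x
  obtain ⟨hqZ, hqd⟩ := hPZ y
  set p := PZ x with hp
  set q := PZ y with hq
  set d := Metric.infDist x Z with hd
  have hd0 : 0 ≤ d := Metric.infDist_nonneg
  have hdx : ‖x - p‖ = d := by rw [← dist_eq_norm]; exact hpd
  have hqy : ‖y - q‖ ≤ α := by rw [← dist_eq_norm, hqd]; exact hy
  -- variational inequality for the projection p
  have hiInf : ‖x - p‖ = ⨅ w : Z, ‖x - (w : X)‖ := by
    rw [← dist_eq_norm, hpd, hd, Metric.infDist_eq_iInf]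
    simp only [dist_eq_norm]
  have hvar : ∀ z ∈ Z, (inner ℝ (x - p) (z - p) : ℝ) ≤ 0 :=
    (norm_eq_iInf_iff_real_inner_le_zero hZconv hpZ).mp hiInf
  -- inner product lower bound
  have hinner : (inner ℝ (x - y) (x - p) : ℝ) ≥ d ^ 2 - α * d := by
    have hsplit : (x : X) - y = (x - p) + ((p - q) + (q - y)) := by abel
    have h1 : (inner ℝ (x - p) (x - p) : ℝ) = d ^ 2 := by
      rw [real_inner_self_eq_norm_sq, hdx]
    have h2 : (0:ℝ) ≤ (inner ℝ (p - q) (x - p) : ℝ) := by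
      have := hvar q hqZ
      have hcomm : (inner ℝ (p - q) (x - p) : ℝ) = - (inner ℝ (x - p) (q - p) : ℝ) := by
        rw [show p - q = -(q - p) by abel, inner_neg_left, real_inner_comm]
      linarith [hcomm ▸ neg_nonneg.mpr this]
    have h3 : (inner ℝ (q - y) (x - p) : ℝ) ≥ -(α * d) := by
      have hle := real_inner_le_norm (y - q) (x - p)
      have hneg : (inner ℝ (q - y) (x - p) : ℝ) = - (inner ℝ (y - q) (x - p) : ℝ) := by
        rw [show q - y = -(y - q) by abel, inner_neg_left]
      have hbd : ‖y - q‖ * ‖x - p‖ ≤ α * d := by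
        rw [hdx]
        exact mul_le_mul_of_nonneg_right hqy hd0
      linarith [hneg]
    calc (inner ℝ (x - y) (x - p) : ℝ) = (inner ℝ (x - p) (x - p) : ℝ) + ((inner ℝ (p - q) (x - p) : ℝ) + (inner ℝ (q - y) (x - p) : ℝ)) := by
          rw [hsplit, inner_add_left, inner_add_left]
      _ ≥ d ^ 2 + (0 + -(α * d)) := by rw [h1]; gcongr
      _ ≥ d ^ 2 - α * d := by linarith
  -- core estimate for Qx of the form x - lam • (x - p)
  have core : ∀ lam : ℝ, 0 ≤ lam → lam * (2 * β) ≤ lam * ((2 - lam) * d) →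
      ‖x - y‖ ^ 2 - ‖(x - lam • (x - p)) - y‖ ^ 2 ≥ 2 * (β - α) * ‖x - (x - lam • (x - p))‖ := by
    intro lam hlam0 hlamβ
    have hnorm : ‖x - (x - lam • (x - p))‖ = lam * d := by
      have : x - (x - lam • (x - p)) = lam • (x - p) := by abel
      rw [this, norm_smul, Real.norm_eq_abs, abs_of_nonneg hlam0, hdx]
    have hrw : (x - lam • (x - p)) - y = (x - y) - lam • (x - p) := by abel
    have hexp : ‖(x - y) - lam • (x - p)‖ ^ 2
        = ‖x - y‖ ^ 2 - 2 * lam * (inner ℝ (x - y) (x - p) : ℝ) + lam ^ 2 * d ^ 2 := by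
      rw [norm_sub_sq_real, real_inner_smul_right, norm_smul, Real.norm_eq_abs,
        abs_of_nonneg hlam0, hdx, mul_pow]
      ring
    rw [hrw, hexp, hnorm]
    nlinarith [mul_le_mul_of_nonneg_left hinner (mul_nonneg (by norm_num : (0:ℝ) ≤ 2) hlam0),
      mul_le_mul_of_nonneg_right hlamβ hd0, mul_nonneg hlam0 hd0]
  -- second half helper
  have second : Q x ∈ C → 2 * (β - α) * ‖x - Q x‖ ≥ 2 * (β - α) * Metric.infDist x C := by
    intro hQC
    have h1 : Metric.infDist x C ≤ ‖x - Q x‖ := by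
      rw [← dist_eq_norm]; exact Metric.infDist_le_dist_of_mem hQC
    have h2 : (0:ℝ) ≤ 2 * (β - α) := by linarith
    exact mul_le_mul_of_nonneg_left h1 h2
  rcases le_or_gt d β with hcase | hcase
  · -- d ≤ β : Q x = x
    have hQx : Q x = x := hQ₂ x hcase
    have hQC : Q x ∈ C := by rw [hQx, hC]; exact hcase
    refine ⟨?_, second hQC⟩
    rw [hQx]
    simp
  rcases lt_or_ge d (2 * β) with hcase2 | hcase2
  · -- β < d < 2β
    obtain ⟨lam, hlam⟩ : ∃ lam : ℝ, lam = d / β - 1 := ⟨_, rfl⟩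
    have hQx : Q x = x - lam • (x - p) := by
      rw [hQ₃ x hcase hcase2]
      have h : (1 - d / β) • (x - p) = -(lam • (x - p)) := by
        rw [hlam, ← neg_smul]; congr 1; ring
      rw [h]; abel
    have hlam0 : 0 ≤ lam := by
      rw [hlam, sub_nonneg, le_div_iff₀ hβ, one_mul]; exact hcase.le
    have hlamβ' : lam * β = d - β := by rw [hlam]; field_simp
    have hQC : Q x ∈ C := by
      rw [hQx, hC]
      have hdist : Metric.infDist (x - lam • (x - p)) Z ≤ ‖(x - lam • (x - p)) - p‖ := by
        rw [← dist_eq_norm]; exact Metric.infDist_le_dist_of_mem hpZ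
      have h1lam : 0 ≤ 1 - lam := by
        have : d / β ≤ 2 := by rw [div_le_iff₀ hβ]; linarith
        rw [hlam]; linarith
      have hrw : (x - lam • (x - p)) - p = (1 - lam) • (x - p) := by
        rw [sub_smul, one_smul]; abel
      have hval : ‖(x - lam • (x - p)) - p‖ = (1 - lam) * d := by
        rw [hrw, norm_smul, Real.norm_eq_abs, abs_of_nonneg h1lam, hdx]
      have hle : (1 - lam) * d ≤ β := by nlinarith [sq_nonneg (d - β), hlamβ', hβ]
      simp only [Set.mem_setOf_eq]
      calc Metric.infDist (x - lam • (x - p)) Z ≤ (1 - lam) * d := by rw [← hval]; exact hdist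
        _ ≤ β := hle
    refine ⟨?_, second hQC⟩
    rw [hQx]
    refine core lam hlam0 ?_
    have hkey : lam * ((2 - lam) * d) * β ^ 2 - lam * (2 * β) * β ^ 2
        = (d - β) ^ 2 * (2 * β - d) := by
      have hl : lam = (d - β) / β := by rw [hlam]; field_simp
      rw [hl]; field_simp; ring
    nlinarith [hkey, mul_pos hβ hβ,
      mul_nonneg (sq_nonneg (d - β)) (sub_nonneg.mpr hcase2.le)]
  · -- 2β ≤ d : Q x = p
    have hQx : Q x = x - (1:ℝ) • (x - p) := by
      rw [hQ₁ x hcase2, one_smul]; abel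
    have hQC : Q x ∈ C := by
      rw [hQ₁ x hcase2, hC]
      simp only [Set.mem_setOf_eq]
      have : Metric.infDist p Z ≤ dist p p := Metric.infDist_le_dist_of_mem hpZ
      simp at this
      calc Metric.infDist p Z ≤ 0 := this
        _ ≤ β := hβ.le
    refine ⟨by rw [hQx]; exact core 1 one_pos.le (by nlinarith), second hQC⟩
end

section
/- Let X be a real Hilbert space, let Z be a nonempty closed convex subset of X, let β > 0, set C := Z_{[β]}, and let Q be the intrepid projector onto C with respect to Z and β. Then Q is quasi nonexpansive with respect to C: for every x ∈ X and every y ∈ C, ‖Qx − y‖ ≤ ‖x − y‖. -/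
/-- intrepid projector is quasi nonexpansive.
Let `X` be a real Hilbert space, `Z` nonempty closed convex, `β > 0`,
`C := Z_[β]`, `Q` the intrepid projector onto `C`.  Then for every `x ∈ X`
and every `y ∈ C`, `‖Qx − y‖ ≤ ‖x − y‖`. -/
theorem intrepid_projector_quasi_nonexpansive
    {X : Type*} [NormedAddCommGroup X] [InnerProductSpace ℝ X] [CompleteSpace X]
    (Z : Set X) (hZne : Z.Nonempty) (hZcl : IsClosed Z) (hZconv : Convex ℝ Z)
    (β : ℝ) (hβ : 0 < β)
    (PZ : X → X) (hPZ : ∀ x : X, PZ x ∈ Z ∧ dist x (PZ x) = Metric.infDist x Z)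
    (C : Set X) (hC : C = {x : X | Metric.infDist x Z ≤ β})
    (Q : X → X)
    (hQ₁ : ∀ x : X, 2 * β ≤ Metric.infDist x Z → Q x = PZ x)
    (hQ₂ : ∀ x : X, Metric.infDist x Z ≤ β → Q x = x)
    (hQ₃ : ∀ x : X, β < Metric.infDist x Z → Metric.infDist x Z < 2 * β →
      Q x = x + (1 - Metric.infDist x Z / β) • (x - PZ x)) :
    ∀ x : X, ∀ y ∈ C, ‖Q x - y‖ ≤ ‖x - y‖ := by
  -- norm of residual equals distance
  have hnorm : ∀ x : X, ‖x - PZ x‖ = Metric.infDist x Z := by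
    intro x
    rw [← dist_eq_norm]
    exact (hPZ x).2
  -- variational inequality for the projection onto Z
  have hvar : ∀ x : X, ∀ z ∈ Z, (inner ℝ (x - PZ x) (z - PZ x) : ℝ) ≤ 0 := by
    intro x z hz
    have hmem := (hPZ x).1
    haveI : Nonempty Z := hZne.to_subtype
    have hinf : ‖x - PZ x‖ = ⨅ w : Z, ‖x - (w : X)‖ := by
      apply le_antisymm
      · apply le_ciInf
        intro w
        rw [← dist_eq_norm, ← dist_eq_norm, (hPZ x).2]
        exact Metric.infDist_le_dist_of_mem w.2
      · have hbdd : BddBelow (Set.range fun w : Z => ‖x - (w : X)‖) := by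
          refine ⟨0, ?_⟩
          rintro a ⟨w, rfl⟩
          exact norm_nonneg _
        exact ciInf_le hbdd (⟨PZ x, hmem⟩ : Z)
    exact (norm_eq_iInf_iff_real_inner_le_zero hZconv hmem).1 hinf z hz
  -- key inequality for y ∈ C
  have hkey : ∀ x y : X, y ∈ C →
      (inner ℝ (x - PZ x) (y - PZ x) : ℝ) ≤ β * ‖x - PZ x‖ := by
    intro x y hy
    have hdy : Metric.infDist y Z ≤ β := by rw [hC] at hy; exact hy
    have hsplit : y - PZ x = (PZ y - PZ x) + (y - PZ y) := by abel
    rw [hsplit, inner_add_right]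
    have h1 : (inner ℝ (x - PZ x) (PZ y - PZ x) : ℝ) ≤ 0 := hvar x (PZ y) (hPZ y).1
    have h2 : (inner ℝ (x - PZ x) (y - PZ y) : ℝ) ≤ ‖x - PZ x‖ * ‖y - PZ y‖ :=
      real_inner_le_norm _ _
    have h3 : ‖y - PZ y‖ ≤ β := by rw [hnorm]; exact hdy
    nlinarith [norm_nonneg (x - PZ x)]
  intro x y hy
  set d := Metric.infDist x Z with hd
  have hdn : 0 ≤ d := Metric.infDist_nonneg
  rcases le_or_gt d β with h1 | h1
  · rw [hQ₂ x h1]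
  rcases lt_or_ge d (2 * β) with h2 | h2
  · -- middle case
    rw [hQ₃ x h1 h2]
    set u := x - PZ x with hu
    set s := 1 - d / β with hs
    have hrw : x + s • u - y = (x - y) + s • u := by abel
    have hub : (inner ℝ (u) (y - PZ x) : ℝ) ≤ β * d := by
      have := hkey x y hy
      rwa [← hu, hnorm x, ← hd] at this
    have hI : d ^ 2 - β * d ≤ (inner ℝ (x - y) (u) : ℝ) := by
      have hsplit : (inner ℝ (u) (x - y) : ℝ) = (inner ℝ (u) (u) : ℝ) - (inner ℝ (u) (y - PZ x) : ℝ) := by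
        rw [← inner_sub_right]
        congr 1
        rw [hu]; abel
      have huu : (inner ℝ (u) (u) : ℝ) = d ^ 2 := by
        rw [real_inner_self_eq_norm_sq, hu, hnorm x]
      rw [real_inner_comm, hsplit, huu]
      linarith
    have hnu : ‖u‖ = d := by rw [hu, hnorm x]
    have hexp : ‖(x - y) + s • u‖ ^ 2 =
        ‖x - y‖ ^ 2 + 2 * (s * (inner ℝ (x - y) (u) : ℝ)) + s ^ 2 * d ^ 2 := by
      rw [norm_add_sq_real, real_inner_smul_right, norm_smul, mul_pow,
        Real.norm_eq_abs, sq_abs, hnu]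
    have hsq : ‖(x - y) + s • u‖ ^ 2 ≤ ‖x - y‖ ^ 2 := by
      rw [hexp]
      set I := (inner ℝ (x - y) (u) : ℝ) with hIdef
      have hs' : s = (β - d) / β := by
        rw [hs]; field_simp
      have h4 : 0 ≤ β * (d - β) * (I - (d ^ 2 - β * d)) :=
        mul_nonneg (mul_nonneg hβ.le (by linarith)) (by linarith)
      have h5 : 0 ≤ d * (d - β) ^ 2 * (2 * β - d) :=
        mul_nonneg (mul_nonneg hdn (sq_nonneg _)) (by linarith)
      have hnum : 2 * β * (β - d) * I + (β - d) ^ 2 * d ^ 2 ≤ 0 := by nlinarith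
      have hcalc : 2 * (s * I) + s ^ 2 * d ^ 2 =
          (2 * β * (β - d) * I + (β - d) ^ 2 * d ^ 2) / β ^ 2 := by
        rw [hs']; field_simp
      have hfin : 2 * (s * I) + s ^ 2 * d ^ 2 ≤ 0 := by
        rw [hcalc]
        exact div_nonpos_of_nonpos_of_nonneg hnum (sq_nonneg β)
      linarith
    rw [hrw]
    nlinarith [norm_nonneg ((x - y) + s • u), norm_nonneg (x - y)]
  · -- far case
    rw [hQ₁ x h2]
    have hub : (inner ℝ (x - PZ x) (y - PZ x) : ℝ) ≤ β * d := by
      have := hkey x y hy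
      rwa [hnorm x, ← hd] at this
    have hexp : ‖x - y‖ ^ 2 =
        d ^ 2 + 2 * (inner ℝ (x - PZ x) (PZ x - y) : ℝ) + ‖PZ x - y‖ ^ 2 := by
      have hrw : x - y = (x - PZ x) + (PZ x - y) := by abel
      rw [hrw, norm_add_sq_real, hnorm x]
    have hneg : (inner ℝ (x - PZ x) (PZ x - y) : ℝ) = -(inner ℝ (x - PZ x) (y - PZ x) : ℝ) := by
      rw [← inner_neg_right]; congr 1; abel
    have hsq : ‖PZ x - y‖ ^ 2 ≤ ‖x - y‖ ^ 2 := by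
      rw [hexp, hneg]; nlinarith
    nlinarith [norm_nonneg (PZ x - y), norm_nonneg (x - y)]
end

section
/- Consider the CycIP setup in a real Hilbert space X with I₁ = ∅ (so every T_i is an intrepid projector onto C_i = (Z_i)_{[β_i]}), an index selector i: ℕ → I, and suppose that the interior of C := ⋂_{i∈I} C_i is nonempty. Then the sequence generated by x_{k+1} := T_{i(k)} x_k from any x₀ ∈ X converges strongly (in norm) to some point of C. -/
open scoped RealInnerProductSpace
open Metric

private lemma proj_var' {X : Type*} [NormedAddCommGroup X] [InnerProductSpace ℝ X]
    {Z : Set X} (hcv : Convex ℝ Z) {x p : X} (hp : p ∈ Z)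
    (hd : dist x p = Metric.infDist x Z) :
    ∀ q ∈ Z, ⟪x - p, q - p⟫ ≤ 0 := by
  have h : ‖x - p‖ = ⨅ w : Z, ‖x - w‖ := by
    rw [← dist_eq_norm, hd, Metric.infDist_eq_iInf]
    congr 1; ext w; rw [dist_eq_norm]
  exact (norm_eq_iInf_iff_real_inner_le_zero hcv hp).mp h

set_option maxHeartbeats 1000000 in
private lemma intrepid_step' {X : Type*} [NormedAddCommGroup X] [InnerProductSpace ℝ X]
    {Z : Set X} (hcv : Convex ℝ Z) {β : ℝ} (hβ : 0 < β)
    {x z p q Tx : X}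
    (hp : p ∈ Z) (hdp : dist x p = Metric.infDist x Z)
    (hq : q ∈ Z) (hdq : dist z q = Metric.infDist z Z)
    (hz : Metric.infDist z Z ≤ β)
    (h1 : 2 * β ≤ Metric.infDist x Z → Tx = p)
    (h2 : Metric.infDist x Z ≤ β → Tx = x)
    (h3 : β < Metric.infDist x Z → Metric.infDist x Z < 2 * β →
      Tx = x + (1 - Metric.infDist x Z / β) • (x - p)) :
    ‖Tx - z‖ ≤ ‖x - z‖ ∧ Metric.infDist Tx Z ≤ β := by
  set d := Metric.infDist x Z with hd
  have hdx : ‖x - p‖ = d := by rw [← dist_eq_norm, hdp]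
  have hd0 : 0 ≤ d := Metric.infDist_nonneg
  -- key inner product bound
  have hqz : ‖q - z‖ ≤ β := by
    rw [norm_sub_rev, ← dist_eq_norm, hdq]; exact hz
  have hvar : ⟪x - p, q - p⟫ ≤ 0 := proj_var' hcv hp hdp q hq
  have hsplit : ⟪x - p, x - z⟫ = ‖x - p‖ ^ 2 - ⟪x - p, q - p⟫ + ⟪x - p, q - z⟫ := by
    have e : x - z = (x - p) - (q - p) + (q - z) := by abel
    rw [e, inner_add_right, inner_sub_right, real_inner_self_eq_norm_sq]
  have hcs : -(d * β) ≤ ⟪x - p, q - z⟫ := by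
    have h1' := abs_real_inner_le_norm (x - p) (q - z)
    have h2' := neg_abs_le (⟪x - p, q - z⟫)
    have : ‖x - p‖ * ‖q - z‖ ≤ d * β := by
      rw [hdx]; exact mul_le_mul_of_nonneg_left hqz hd0
    linarith
  have hkey : d ^ 2 - d * β ≤ ⟪x - p, x - z⟫ := by
    rw [hsplit, hdx]; nlinarith
  rcases le_or_gt d β with hcase1 | hcase1
  · -- Tx = x
    rw [h2 hcase1]
    exact ⟨le_refl _, by rw [← hd]; exact hcase1⟩
  rcases lt_or_ge d (2 * β) with hcase2 | hcase2
  · -- middle zone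
    have hTx := h3 hcase1 hcase2
    set μ := d / β - 1 with hμ
    have hμpos : 0 < μ := by
      rw [hμ]; have := (one_lt_div hβ).mpr hcase1; linarith
    have hμlt : μ < 1 := by
      rw [hμ]
      have : d / β < 2 := (div_lt_iff₀ hβ).mpr (by linarith)
      linarith
    have hμval : μ * β = d - β := by rw [hμ]; field_simp
    have h5 : μ * β * d = d ^ 2 - d * β := by rw [hμval]; ring
    have hmc : (1 - d / β : ℝ) = -μ := by rw [hμ]; ring
    have hTz : Tx - z = (x - z) - μ • (x - p) := by
      rw [hTx, hmc, neg_smul]; abel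
    have hTp : Tx - p = (1 - μ) • (x - p) := by
      rw [hTx, hmc, neg_smul, sub_smul, one_smul]; module
    have hnsq : ‖Tx - z‖ ^ 2 = ‖x - z‖ ^ 2 - 2 * (μ * ⟪x - p, x - z⟫) + μ ^ 2 * d ^ 2 := by
      rw [hTz, norm_sub_sq_real, real_inner_smul_right, norm_smul, Real.norm_eq_abs,
        abs_of_pos hμpos, mul_pow, hdx, real_inner_comm]
    have hIk : μ * β * d ≤ ⟪x - p, x - z⟫ := by linarith
    have hle2 : ‖Tx - z‖ ^ 2 ≤ ‖x - z‖ ^ 2 := by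
      rw [hnsq]
      nlinarith [mul_le_mul_of_nonneg_left hIk (le_of_lt hμpos),
        mul_nonneg (mul_nonneg (sq_nonneg μ) hd0) (by linarith : (0:ℝ) ≤ 2 * β - d)]
    constructor
    · nlinarith [norm_nonneg (Tx - z), norm_nonneg (x - z)]
    · have hdist : Metric.infDist Tx Z ≤ ‖Tx - p‖ := by
        rw [← dist_eq_norm]; exact Metric.infDist_le_dist_of_mem hp
      have : ‖Tx - p‖ = (1 - μ) * d := by
        rw [hTp, norm_smul, Real.norm_eq_abs, abs_of_pos (by linarith), hdx]
      rw [this] at hdist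
      nlinarith [sq_nonneg (d - β), mul_pos hβ hβ]
  · -- far zone: Tx = p
    have hTx := h1 hcase2
    rw [hTx]
    constructor
    · have hexp : ‖x - z‖ ^ 2 = ‖x - p‖ ^ 2 + 2 * ⟪x - p, p - z⟫ + ‖p - z‖ ^ 2 := by
        have e : x - z = (x - p) + (p - z) := by abel
        rw [e, norm_add_sq_real]
      have hip : ⟪x - p, p - z⟫ = ⟪x - p, x - z⟫ - ‖x - p‖ ^ 2 := by
        have e : p - z = (x - z) - (x - p) := by abel
        rw [e, inner_sub_right, real_inner_self_eq_norm_sq]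
      have hle2 : ‖p - z‖ ^ 2 ≤ ‖x - z‖ ^ 2 := by
        rw [hexp, hip, hdx]; nlinarith
      nlinarith [norm_nonneg (p - z), norm_nonneg (x - z)]
    · rw [Metric.infDist_zero_of_mem hp]; linarith



/-- intrepid projections only.
CycIP setup with `I₁ = ∅`: every `T i` is the intrepid projector onto
`C i = (Z i)_[β i]`.  If the interior of `C := ⋂ i, C i` is nonempty, then
from any starting point the generated sequence converges strongly (in norm)
to some point of `C`. -/
theorem cycIP_intrepid_only_strong_convergence
    {X : Type*} [NormedAddCommGroup X] [InnerProductSpace ℝ X] [CompleteSpace X]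
    {ι : Type*} [Fintype ι] [Nonempty ι]
    (C : ι → Set X) (Z : ι → Set X) (β : ι → ℝ) (PZ : ι → X → X)
    (hZ : ∀ i, (Z i).Nonempty ∧ IsClosed (Z i) ∧ Convex ℝ (Z i))
    (hβ : ∀ i, 0 < β i)
    (hC : ∀ i, C i = {x : X | Metric.infDist x (Z i) ≤ β i})
    (hPZ : ∀ i, ∀ x : X, PZ i x ∈ Z i ∧ dist x (PZ i x) = Metric.infDist x (Z i))
    (T : ι → X → X)
    (hT : ∀ i, ∀ x : X,
      (2 * β i ≤ Metric.infDist x (Z i) → T i x = PZ i x) ∧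
      (Metric.infDist x (Z i) ≤ β i → T i x = x) ∧
      (β i < Metric.infDist x (Z i) → Metric.infDist x (Z i) < 2 * β i →
        T i x = x + (1 - Metric.infDist x (Z i) / β i) • (x - PZ i x)))
    (hint : (interior (⋂ i, C i)).Nonempty)
    (sel : ℕ → ι) (hsel : ∀ i, {k : ℕ | sel k = i}.Infinite)
    (x : ℕ → X) (hx : ∀ k : ℕ, x (k + 1) = T (sel k) (x k)) :
    ∃ xbar ∈ ⋂ i, C i, Filter.Tendsto x Filter.atTop (nhds xbar) := by
  classical
  obtain ⟨c, hc⟩ := hint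
  obtain ⟨ε, hε, hball⟩ := Metric.mem_nhds_iff.mp (mem_interior_iff_mem_nhds.mp hc)
  have hcC : ∀ w ∈ Metric.ball c ε, ∀ i, Metric.infDist w (Z i) ≤ β i := by
    intro w hw i
    have h := hball hw
    rw [Set.mem_iInter] at h
    have h2 := h i
    rw [hC i] at h2
    exact h2
  have hcc : ∀ i, Metric.infDist c (Z i) ≤ β i := hcC c (Metric.mem_ball_self hε)
  -- main step: quasi-nonexpansivity and membership
  have main : ∀ (k : ℕ) (z : X), Metric.infDist z (Z (sel k)) ≤ β (sel k) →
      ‖x (k + 1) - z‖ ≤ ‖x k - z‖ ∧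
        Metric.infDist (x (k + 1)) (Z (sel k)) ≤ β (sel k) := by
    intro k z hz
    obtain ⟨hne, hcl, hcv⟩ := hZ (sel k)
    obtain ⟨hp, hdp⟩ := hPZ (sel k) (x k)
    obtain ⟨hq, hdq⟩ := hPZ (sel k) z
    obtain ⟨h1, h2, h3⟩ := hT (sel k) (x k)
    exact intrepid_step' hcv (hβ (sel k)) hp hdp hq hdq hz
      (fun h => (hx k).trans (h1 h)) (fun h => (hx k).trans (h2 h))
      (fun ha hb => (hx k).trans (h3 ha hb))
  -- Fejér-type inequality with the interior ball
  have hfej : ∀ k : ℕ, ε / 2 * ‖x (k + 1) - x k‖ ≤ ‖x k - c‖ ^ 2 - ‖x (k + 1) - c‖ ^ 2 := by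
    intro k
    by_cases hv : x (k + 1) = x k
    · have h := (main k c (hcc (sel k))).1
      rw [hv]
      simp
    · set v := x k - x (k + 1) with hvdef
      have hv0 : v ≠ 0 := sub_ne_zero.mpr fun h => hv h.symm
      have hnv : 0 < ‖v‖ := norm_pos_iff.mpr hv0
      set u := (ε / (2 * ‖v‖)) • v with hu
      have hupos : (0:ℝ) < ε / (2 * ‖v‖) := by positivity
      have hu_norm : ‖u‖ = ε / 2 := by
        rw [hu, norm_smul, Real.norm_eq_abs, abs_of_pos hupos]
        field_simp
      have hzball : c + u ∈ Metric.ball c ε := by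
        rw [Metric.mem_ball, dist_eq_norm]
        have : c + u - c = u := by abel
        rw [this, hu_norm]
        linarith
      have hquasi := (main k (c + u) (hcC _ hzball (sel k))).1
      have hq2 : ‖x (k + 1) - (c + u)‖ ^ 2 ≤ ‖x k - (c + u)‖ ^ 2 :=
        pow_le_pow_left₀ (norm_nonneg _) hquasi 2
      have e1 : x (k + 1) - (c + u) = (x (k + 1) - c) - u := by abel
      have e2 : x k - (c + u) = (x k - c) - u := by abel
      rw [e1, e2, norm_sub_sq_real (x (k + 1) - c) u, norm_sub_sq_real (x k - c) u] at hq2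
      have hinner : ⟪x (k + 1) - c, u⟫ - ⟪x k - c, u⟫ = -(ε / 2 * ‖v‖) := by
        rw [← inner_sub_left]
        have e3 : x (k + 1) - c - (x k - c) = -v := by rw [hvdef]; abel
        rw [e3, inner_neg_left, hu, real_inner_smul_right, real_inner_self_eq_norm_sq]
        have : ε / (2 * ‖v‖) * ‖v‖ ^ 2 = ε / 2 * ‖v‖ := by
          field_simp
        rw [this]
      have hrev : ‖x (k + 1) - x k‖ = ‖v‖ := by rw [hvdef, norm_sub_rev]
      rw [hrev]
      linarith [mul_pos (half_pos hε) hnv]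
  -- summability of step sizes, hence Cauchy
  have hsum : Summable (fun k => dist (x k) (x (k + 1))) := by
    apply summable_of_sum_range_le (c := ‖x 0 - c‖ ^ 2 / (ε / 2)) (fun n => dist_nonneg)
    intro n
    have htel : ∑ k ∈ Finset.range n, (‖x k - c‖ ^ 2 - ‖x (k + 1) - c‖ ^ 2)
        = ‖x 0 - c‖ ^ 2 - ‖x n - c‖ ^ 2 :=
      Finset.sum_range_sub' (fun k => ‖x k - c‖ ^ 2) n
    have hterm : ∀ k ∈ Finset.range n, ε / 2 * dist (x k) (x (k + 1))
        ≤ ‖x k - c‖ ^ 2 - ‖x (k + 1) - c‖ ^ 2 := by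
      intro k _
      have := hfej k
      rw [dist_eq_norm, norm_sub_rev]
      exact this
    have hsumle : ε / 2 * ∑ k ∈ Finset.range n, dist (x k) (x (k + 1))
        ≤ ‖x 0 - c‖ ^ 2 - ‖x n - c‖ ^ 2 := by
      rw [Finset.mul_sum]
      calc ∑ k ∈ Finset.range n, ε / 2 * dist (x k) (x (k + 1))
          ≤ ∑ k ∈ Finset.range n, (‖x k - c‖ ^ 2 - ‖x (k + 1) - c‖ ^ 2) :=
            Finset.sum_le_sum hterm
        _ = ‖x 0 - c‖ ^ 2 - ‖x n - c‖ ^ 2 := htel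
    have hε2 : (0:ℝ) < ε / 2 := by linarith
    rw [le_div_iff₀ hε2]
    nlinarith [sq_nonneg ‖x n - c‖]
  have hcauchy : CauchySeq x := cauchySeq_of_summable_dist hsum
  obtain ⟨xbar, hxbar⟩ := cauchySeq_tendsto_of_complete hcauchy
  refine ⟨xbar, ?_, hxbar⟩
  rw [Set.mem_iInter]
  intro i
  have hclosed : IsClosed (C i) := by
    rw [hC i]
    exact isClosed_le (Metric.continuous_infDist_pt (Z i)) continuous_const
  have hfreq : ∃ᶠ k in Filter.atTop, x k ∈ C i := by
    rw [Filter.frequently_atTop]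
    intro N
    obtain ⟨k, hk, hkN⟩ := (hsel i).exists_gt N
    refine ⟨k + 1, by omega, ?_⟩
    have hmem := (main k c (hcc (sel k))).2
    rw [hk] at hmem
    rw [hC i]
    exact hmem
  exact hclosed.mem_of_frequently_of_tendsto hfreq hxbar
end

section
/- Consider the CycIP setup in a real Hilbert space X, and suppose that ⋂_{i∈I₁} C_i ∩ ⋂_{i∈I₀} int C_i ≠ ∅ and that the control is quasicyclic with some quasiperiod M ≥ 1. Then the sequence generated by x_{k+1} := T_{i(k)} x_k from any x₀ ∈ X converges weakly to some point of C := ⋂_{i∈I} C_i. -/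
open scoped RealInnerProductSpace
open Metric Filter Topology

set_option linter.unusedSectionVars false
set_option linter.unusedVariables false
set_option maxHeartbeats 1000000

section CycIPHelpers


variable {X : Type*} [NormedAddCommGroup X] [InnerProductSpace ℝ X]

lemma cycIP_le_infDist {S : Set X} (hS : S.Nonempty) {x : X} {c : ℝ}
    (h : ∀ y ∈ S, c ≤ dist x y) : c ≤ Metric.infDist x S := by
  by_contra hlt
  push_neg at hlt
  obtain ⟨y, hy, hd⟩ := (Metric.infDist_lt_iff hS).mp hlt
  exact absurd (h y hy) (not_le.mpr hd)

lemma cycIP_proj_inner_le {S : Set X} (hconv : Convex ℝ S) {x p : X} (hp : p ∈ S)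
    (hmin : dist x p = Metric.infDist x S) {z : X} (hz : z ∈ S) :
    ⟪x - p, z - p⟫ ≤ 0 := by
  have h1 : ‖x - p‖ = ⨅ w : S, ‖x - w‖ := by
    rw [← dist_eq_norm, hmin, Metric.infDist_eq_iInf]
    simp_rw [dist_eq_norm]
  exact (norm_eq_iInf_iff_real_inner_le_zero hconv hp).mp h1 z hz

lemma cycIP_intrepid_dist {Z : Set X} {β : ℝ} (hβ : 0 < β)
    {P : X → X} (hP : ∀ x, P x ∈ Z ∧ dist x (P x) = Metric.infDist x Z)
    {T : X → X}
    (hT : ∀ x : X, (2 * β ≤ Metric.infDist x Z → T x = P x) ∧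
      (Metric.infDist x Z ≤ β → T x = x) ∧
      (β < Metric.infDist x Z → Metric.infDist x Z < 2 * β →
        T x = x + (1 - Metric.infDist x Z / β) • (x - P x)))
    (x : X) :
    Metric.infDist x {w : X | Metric.infDist w Z ≤ β} ≤ ‖T x - x‖ := by
  set d := Metric.infDist x Z with hd
  have hdx : ‖x - P x‖ = d := by rw [← dist_eq_norm]; exact (hP x).2
  rcases le_or_gt d β with h1 | h1
  · have hx : x ∈ {w : X | Metric.infDist w Z ≤ β} := h1
    rw [Metric.infDist_zero_of_mem hx]
    exact norm_nonneg _
  · have hd0 : (0 : ℝ) < d := lt_trans hβ h1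
    set q := P x + (β / d) • (x - P x) with hq
    have hqZ : Metric.infDist q Z ≤ β := by
      have : dist q (P x) = β := by
        rw [dist_eq_norm]
        have : q - P x = (β / d) • (x - P x) := by rw [hq]; abel
        rw [this, norm_smul, Real.norm_eq_abs, abs_of_pos (by positivity), hdx]
        field_simp
      calc Metric.infDist q Z ≤ dist q (P x) := Metric.infDist_le_dist_of_mem (hP x).1
        _ = β := this
    have hxq : dist x q = d - β := by
      rw [dist_eq_norm]
      have e : x - q = (1 - β / d) • (x - P x) := by
        rw [hq, sub_smul, one_smul]; abel
      have hb1 : β / d ≤ 1 := by rw [div_le_one hd0]; linarith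
      rw [e, norm_smul, Real.norm_eq_abs, abs_of_nonneg (by linarith), hdx]
      field_simp
    have h5 : Metric.infDist x {w : X | Metric.infDist w Z ≤ β} ≤ d - β := by
      rw [← hxq]; exact Metric.infDist_le_dist_of_mem hqZ
    refine le_trans h5 ?_
    rcases lt_or_ge d (2 * β) with h2 | h2
    · have hTx : T x = x + (1 - d / β) • (x - P x) := (hT x).2.2 h1 h2
      have e : T x - x = (1 - d / β) • (x - P x) := by rw [hTx]; abel
      have hneg : 1 - d / β ≤ 0 := by
        have : 1 < d / β := (one_lt_div hβ).mpr h1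
        linarith
      rw [e, norm_smul, Real.norm_eq_abs, abs_of_nonpos hneg, hdx]
      have : (d / β - 1) * d = (d - β) * (d / β) := by field_simp
      have hge1 : 1 ≤ d / β := le_of_lt ((one_lt_div hβ).mpr h1)
      nlinarith
    · have hTx : T x = P x := (hT x).1 h2
      have e : ‖T x - x‖ = d := by rw [hTx, ← hdx, norm_sub_rev]
      rw [e]; linarith

lemma cycIP_relaxed_step {S : Set X} (hconv : Convex ℝ S)
    {P : X → X} (hP : ∀ x, P x ∈ S ∧ dist x (P x) = Metric.infDist x S)
    {lam : ℝ} (hl0 : 0 < lam) (hl2 : lam < 2)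
    {T : X → X} (hT : ∀ x, T x = (1 - lam) • x + lam • P x) (x : X) :
    ‖T x - x‖ = lam * Metric.infDist x S ∧
    ∀ y ∈ S, ‖T x - y‖ ^ 2 ≤ ‖x - y‖ ^ 2 - ((2 - lam) / lam) * ‖T x - x‖ ^ 2 := by
  have hD : ‖x - P x‖ = Metric.infDist x S := by rw [← dist_eq_norm]; exact (hP x).2
  have hTxx : T x - x = -(lam • (x - P x)) := by
    rw [hT x, sub_smul, one_smul, smul_sub]; abel
  have hnorm : ‖T x - x‖ = lam * Metric.infDist x S := by
    rw [hTxx, norm_neg, norm_smul, Real.norm_eq_abs, abs_of_pos hl0, hD]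
  refine ⟨hnorm, fun y hy => ?_⟩
  set D := Metric.infDist x S with hDdef
  have hD0 : (0 : ℝ) ≤ D := Metric.infDist_nonneg
  have hinner : D ^ 2 ≤ ⟪x - y, x - P x⟫ := by
    have e0 : x - y = (x - P x) - (y - P x) := by abel
    have e1 : ⟪x - y, x - P x⟫ = ⟪x - P x, x - P x⟫ - ⟪y - P x, x - P x⟫ := by
      rw [e0, inner_sub_left]
    have e2 : ⟪x - P x, x - P x⟫ = D ^ 2 := by rw [real_inner_self_eq_norm_sq, hD]
    have e3 : ⟪y - P x, x - P x⟫ ≤ 0 := by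
      have := cycIP_proj_inner_le hconv (hP x).1 (hP x).2 hy
      rwa [real_inner_comm] at this
    linarith
  have e0 : T x - y = (x - y) - lam • (x - P x) := by
    rw [hT x, sub_smul, one_smul, smul_sub]; abel
  have expand : ‖T x - y‖ ^ 2
      = ‖x - y‖ ^ 2 - 2 * (lam * ⟪x - y, x - P x⟫) + lam ^ 2 * D ^ 2 := by
    rw [e0, norm_sub_sq_real, real_inner_smul_right, norm_smul, Real.norm_eq_abs,
      mul_pow, sq_abs, hD]
  rw [expand, hnorm]
  have hcoef : (2 - lam) / lam * (lam * D) ^ 2 = (2 * lam - lam ^ 2) * D ^ 2 := by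
    field_simp
  rw [hcoef]
  nlinarith [mul_le_mul_of_nonneg_left hinner (le_of_lt hl0)]

lemma cycIP_slack_of_ball {Z : Set X} (hconv : Convex ℝ Z)
    {P : X → X} (hP : ∀ x, P x ∈ Z ∧ dist x (P x) = Metric.infDist x Z)
    {β r : ℝ} (hβ : 0 < β) (hr : 0 < r) {z : X}
    (hball : Metric.ball z r ⊆ {x : X | Metric.infDist x Z ≤ β}) :
    Metric.infDist z Z ≤ β - min (r / 2) β := by
  set d := Metric.infDist z Z with hd
  rcases eq_or_lt_of_le (Metric.infDist_nonneg : (0 : ℝ) ≤ d) with h0 | h0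
  · have hd0 : d = 0 := h0.symm
    rw [hd0]
    have : min (r / 2) β ≤ β := min_le_right _ _
    linarith
  · have hzP : ‖z - P z‖ = d := by rw [← dist_eq_norm]; exact (hP z).2
    set u := d⁻¹ • (z - P z) with hu
    have hun : ‖u‖ = 1 := by
      rw [hu, norm_smul, Real.norm_eq_abs, abs_of_pos (inv_pos.2 h0), hzP]
      field_simp
      exact hd
    set w := z + (r / 2) • u with hw
    have hwball : w ∈ Metric.ball z r := by
      rw [Metric.mem_ball, dist_eq_norm]
      have : w - z = (r / 2) • u := by rw [hw]; abel
      rw [this, norm_smul, Real.norm_eq_abs, abs_of_pos (by positivity), hun]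
      linarith
    have h1 : Metric.infDist w Z ≤ β := hball hwball
    have h2 : d + r / 2 ≤ Metric.infDist w Z := by
      apply cycIP_le_infDist ⟨P z, (hP z).1⟩
      intro q hq
      have e1 : ⟪w - q, u⟫ = ⟪z - P z, u⟫ + (r / 2) * ⟪u, u⟫ + ⟪P z - q, u⟫ := by
        have : w - q = (z - P z) + (r / 2) • u + (P z - q) := by rw [hw]; abel
        rw [this, inner_add_left, inner_add_left, real_inner_smul_left]
      have e2 : ⟪z - P z, u⟫ = d := by
        rw [hu, real_inner_smul_right, real_inner_self_eq_norm_sq, hzP]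
        field_simp
      have e3 : ⟪u, u⟫ = 1 := by rw [real_inner_self_eq_norm_sq, hun]; norm_num
      have e4 : (0 : ℝ) ≤ ⟪P z - q, u⟫ := by
        have h5 := cycIP_proj_inner_le hconv (hP z).1 (hP z).2 hq
        have h6 : ⟪P z - q, z - P z⟫ = -⟪z - P z, q - P z⟫ := by
          rw [real_inner_comm]
          have : P z - q = -(q - P z) := by abel
          rw [this, inner_neg_right]
        have h7 : 0 ≤ ⟪P z - q, z - P z⟫ := by rw [h6]; linarith
        rw [hu, real_inner_smul_right]
        positivity
      calc d + r / 2 = d + (r / 2) * 1 + 0 := by ring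
        _ ≤ ⟪w - q, u⟫ := by rw [e1, e2, e3]; linarith
        _ ≤ ‖w - q‖ * ‖u‖ := real_inner_le_norm _ _
        _ = dist w q := by rw [hun, mul_one, dist_eq_norm]
    have : min (r / 2) β ≤ r / 2 := min_le_left _ _
    linarith


lemma cycIP_ultrafilter_cluster [CompleteSpace X] (V : Ultrafilter ℕ)
    (y : ℕ → X) {R : ℝ} (hR : ∀ k, ‖y k‖ ≤ R) :
    ∃ w : X, ∀ u : X, Tendsto (fun k => ⟪y k, u⟫) (V : Filter ℕ) (𝓝 ⟪w, u⟫) := by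
  have hR0 : (0 : ℝ) ≤ R := le_trans (norm_nonneg (y 0)) (hR 0)
  have hex : ∀ u : X, ∃ c : ℝ, Tendsto (fun k => ⟪y k, u⟫) (V : Filter ℕ) (𝓝 c) := by
    intro u
    have hmem : (Set.Icc (-(R * ‖u‖)) (R * ‖u‖)) ∈ Ultrafilter.map (fun k => ⟪y k, u⟫) V := by
      rw [Ultrafilter.mem_map]
      apply Filter.univ_mem'
      intro k
      have h1 : |⟪y k, u⟫| ≤ ‖y k‖ * ‖u‖ := abs_real_inner_le_norm _ _
      have h2 : ‖y k‖ * ‖u‖ ≤ R * ‖u‖ := mul_le_mul_of_nonneg_right (hR k) (norm_nonneg u)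
      have h3 : |⟪y k, u⟫| ≤ R * ‖u‖ := le_trans h1 h2
      exact abs_le.mp h3
    obtain ⟨c, _, hcle⟩ := (isCompact_Icc (a := -(R * ‖u‖)) (b := R * ‖u‖)).ultrafilter_le_nhds
      (Ultrafilter.map (fun k => ⟪y k, u⟫) V) (le_principal_iff.mpr hmem)
    refine ⟨c, ?_⟩
    rwa [Ultrafilter.coe_map] at hcle
  choose f hf using hex
  have hadd : ∀ u v : X, f (u + v) = f u + f v := by
    intro u v
    have h1 : Tendsto (fun k => ⟪y k, u⟫ + ⟪y k, v⟫) (V : Filter ℕ) (𝓝 (f u + f v)) :=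
      (hf u).add (hf v)
    have h2 : Tendsto (fun k => ⟪y k, u + v⟫) (V : Filter ℕ) (𝓝 (f u + f v)) := by
      simpa [inner_add_right] using h1
    exact tendsto_nhds_unique (hf (u + v)) h2
  have hsmul : ∀ (c : ℝ) (u : X), f (c • u) = c * f u := by
    intro c u
    have h1 : Tendsto (fun k => c * ⟪y k, u⟫) (V : Filter ℕ) (𝓝 (c * f u)) :=
      (hf u).const_mul c
    have h2 : Tendsto (fun k => ⟪y k, c • u⟫) (V : Filter ℕ) (𝓝 (c * f u)) := by
      simpa [real_inner_smul_right] using h1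
    exact tendsto_nhds_unique (hf (c • u)) h2
  have hbound : ∀ u : X, ‖f u‖ ≤ R * ‖u‖ := by
    intro u
    have h1 : Tendsto (fun k => |⟪y k, u⟫|) (V : Filter ℕ) (𝓝 |f u|) := (hf u).abs
    have h2 : ∀ᶠ k in (V : Filter ℕ), |⟪y k, u⟫| ≤ R * ‖u‖ := by
      apply Filter.Eventually.of_forall
      intro k
      exact le_trans (abs_real_inner_le_norm _ _)
        (mul_le_mul_of_nonneg_right (hR k) (norm_nonneg u))
    have := le_of_tendsto h1 h2
    rwa [Real.norm_eq_abs]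
  let F : X →ₗ[ℝ] ℝ :=
    { toFun := f
      map_add' := hadd
      map_smul' := hsmul }
  let F' : X →L[ℝ] ℝ := F.mkContinuous R hbound
  refine ⟨(InnerProductSpace.toDual ℝ X).symm F', fun u => ?_⟩
  rw [InnerProductSpace.toDual_symm_apply]
  exact hf u

lemma cycIP_mem_of_cluster [CompleteSpace X] (V : Ultrafilter ℕ)
    (hV : (V : Filter ℕ) ≤ atTop)
    (y : ℕ → X) {w : X} (hw : ∀ u : X, Tendsto (fun k => ⟪y k, u⟫) (V : Filter ℕ) (𝓝 ⟪w, u⟫))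
    {S : Set X} (hne : S.Nonempty) (hcl : IsClosed S) (hconv : Convex ℝ S)
    (hdist : Tendsto (fun k => Metric.infDist (y k) S) atTop (𝓝 0)) : w ∈ S := by
  obtain ⟨p, hpS, hpmin⟩ := exists_norm_eq_iInf_of_complete_convex hne hcl.isComplete hconv w
  have hproj : ∀ z ∈ S, ⟪w - p, z - p⟫ ≤ 0 :=
    (norm_eq_iInf_iff_real_inner_le_zero hconv hpS).mp hpmin
  have hck : ∀ k : ℕ, ∃ c ∈ S, dist (y k) c < Metric.infDist (y k) S + 1 / (k + 1) := by
    intro k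
    apply (Metric.infDist_lt_iff hne).mp
    have : (0 : ℝ) < 1 / (k + 1) := by positivity
    linarith
  choose c hcS hcd using hck
  have hkey : ∀ k : ℕ,
      ⟪y k, w - p⟫ - (Metric.infDist (y k) S + 1 / (k + 1)) * ‖w - p‖ ≤ ⟪p, w - p⟫ := by
    intro k
    have h1 : ⟪c k - p, w - p⟫ ≤ 0 := by
      have := hproj (c k) (hcS k)
      rwa [real_inner_comm] at this
    have h2 : ⟪y k - c k, w - p⟫ ≤ (Metric.infDist (y k) S + 1 / (k + 1)) * ‖w - p‖ := by
      calc ⟪y k - c k, w - p⟫ ≤ ‖y k - c k‖ * ‖w - p‖ := real_inner_le_norm _ _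
        _ ≤ (Metric.infDist (y k) S + 1 / (k + 1)) * ‖w - p‖ := by
          apply mul_le_mul_of_nonneg_right _ (norm_nonneg _)
          rw [← dist_eq_norm]
          exact le_of_lt (hcd k)
    have h3 : ⟪y k, w - p⟫ = ⟪y k - c k, w - p⟫ + ⟪c k - p, w - p⟫ + ⟪p, w - p⟫ := by
      rw [← inner_add_left, ← inner_add_left]
      congr 1
      abel
    linarith
  have hsmall : Tendsto (fun k : ℕ => Metric.infDist (y k) S + 1 / ((k : ℝ) + 1)) atTop (𝓝 0) := by
    have h0 := hdist.add tendsto_one_div_add_atTop_nhds_zero_nat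
    simpa using h0
  have hlim : Tendsto
      (fun k => ⟪y k, w - p⟫ - (Metric.infDist (y k) S + 1 / (k + 1)) * ‖w - p‖)
      (V : Filter ℕ) (𝓝 (⟪w, w - p⟫ - 0 * ‖w - p‖)) :=
    (hw (w - p)).sub ((hsmall.mono_left hV).mul_const _)
  have hle := le_of_tendsto hlim (Filter.Eventually.of_forall hkey)
  have h4 : ⟪w - p, w - p⟫ ≤ 0 := by
    rw [inner_sub_left]
    linarith [hle]
  have h5 : w - p = 0 := by
    have h6 : ⟪w - p, w - p⟫ = 0 :=
      le_antisymm h4 real_inner_self_nonneg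
    exact inner_self_eq_zero.mp h6
  have : w = p := sub_eq_zero.mp h5
  rw [this]; exact hpS

lemma cycIP_not_tendsto {f : ℕ → ℝ} {a : ℝ}
    (h : ¬ Tendsto f atTop (𝓝 a)) : ∃ ε > 0, ∃ᶠ k in atTop, ε ≤ |f k - a| := by
  rw [Metric.tendsto_atTop] at h
  push_neg at h
  obtain ⟨ε, hε, hfr⟩ := h
  refine ⟨ε, hε, ?_⟩
  rw [Filter.frequently_atTop]
  intro N
  obtain ⟨n, hn, hd⟩ := hfr N
  exact ⟨n, hn, by rwa [Real.dist_eq] at hd⟩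


lemma cycIP_intrepid_step {Z : Set X} (hconv : Convex ℝ Z) {β : ℝ} (hβ : 0 < β)
    {P : X → X} (hP : ∀ x, P x ∈ Z ∧ dist x (P x) = Metric.infDist x Z)
    {T : X → X}
    (hT : ∀ x : X, (2 * β ≤ Metric.infDist x Z → T x = P x) ∧
      (Metric.infDist x Z ≤ β → T x = x) ∧
      (β < Metric.infDist x Z → Metric.infDist x Z < 2 * β →
        T x = x + (1 - Metric.infDist x Z / β) • (x - P x)))
    {ε : ℝ} (hε : 0 ≤ ε) {y : X} (hy : Metric.infDist y Z ≤ β - ε) (x : X) :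
    ‖T x - y‖ ^ 2 ≤ ‖x - y‖ ^ 2 - 2 * ε * ‖T x - x‖ := by
  set d := Metric.infDist x Z with hd
  have hdx : ‖x - P x‖ = d := by rw [← dist_eq_norm]; exact (hP x).2
  have hd0 : (0 : ℝ) ≤ d := Metric.infDist_nonneg
  have hyP : ‖y - P y‖ = Metric.infDist y Z := by rw [← dist_eq_norm]; exact (hP y).2
  -- inner product lower bound
  have hinner : d ^ 2 - (β - ε) * d ≤ ⟪x - y, x - P x⟫ := by
    have e0 : x - y = (x - P x) - (y - P x) := by abel
    have e1 : ⟪x - y, x - P x⟫ = ⟪x - P x, x - P x⟫ - ⟪y - P x, x - P x⟫ := by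
      rw [e0, inner_sub_left]
    have e2 : ⟪x - P x, x - P x⟫ = d ^ 2 := by rw [real_inner_self_eq_norm_sq, hdx]
    have e3 : y - P x = (y - P y) + (P y - P x) := by abel
    have e4 : ⟪y - P x, x - P x⟫ = ⟪y - P y, x - P x⟫ + ⟪P y - P x, x - P x⟫ := by
      rw [e3, inner_add_left]
    have e5 : ⟪y - P y, x - P x⟫ ≤ (β - ε) * d := by
      calc ⟪y - P y, x - P x⟫ ≤ ‖y - P y‖ * ‖x - P x‖ := real_inner_le_norm _ _
        _ ≤ (β - ε) * d := by
          rw [hyP, hdx]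
          exact mul_le_mul_of_nonneg_right hy hd0
    have e6 : ⟪P y - P x, x - P x⟫ ≤ 0 := by
      have := cycIP_proj_inner_le hconv (hP x).1 (hP x).2 (hP y).1
      rwa [real_inner_comm] at this
    nlinarith [e1, e2, e4, e5, e6]
  -- the key computation for a relaxation parameter t
  have key : ∀ t : ℝ, 0 ≤ t → (t * d ≤ 2 * (d - β) ∨ t = 0) →
      ‖(x - t • (x - P x)) - y‖ ^ 2 ≤ ‖x - y‖ ^ 2 - 2 * ε * (t * d) := by
    intro t ht0 hcase
    have e0 : (x - t • (x - P x)) - y = (x - y) - t • (x - P x) := by abel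
    have expand : ‖(x - t • (x - P x)) - y‖ ^ 2
        = ‖x - y‖ ^ 2 - 2 * (t * ⟪x - y, x - P x⟫) + t ^ 2 * d ^ 2 := by
      rw [e0, norm_sub_sq_real, real_inner_smul_right, norm_smul, Real.norm_eq_abs,
        mul_pow, sq_abs, hdx]
    rw [expand]
    rcases hcase with hcase | hcase
    · have htd0 : 0 ≤ t * d := mul_nonneg ht0 hd0
      have h1 : (t * d) * (t * d) ≤ (2 * (d - β)) * (t * d) :=
        mul_le_mul_of_nonneg_right hcase htd0
      nlinarith [mul_le_mul_of_nonneg_left hinner ht0]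
    · subst hcase; simp
  rcases le_or_gt d β with h1 | h1
  · rw [(hT x).2.1 h1]
    simp
  · rcases lt_or_ge d (2 * β) with h2 | h2
    · -- middle regime
      set t : ℝ := d / β - 1 with htdef
      have ht0 : 0 ≤ t := by
        have : 1 < d / β := (one_lt_div hβ).mpr h1
        simp only [htdef]; linarith
      have hTx : T x = x - t • (x - P x) := by
        rw [(hT x).2.2 h1 h2]
        have : (1 - d / β) = -t := by simp only [htdef]; ring
        rw [this, neg_smul]
        abel
      have htd : t * d ≤ 2 * (d - β) := by
        have ht : t = (d - β) / β := by simp only [htdef]; field_simp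
        rw [ht, div_mul_eq_mul_div, div_le_iff₀ hβ]
        nlinarith
      have hnorm : ‖T x - x‖ = t * d := by
        have e : T x - x = -(t • (x - P x)) := by rw [hTx]; abel
        rw [e, norm_neg, norm_smul, Real.norm_eq_abs, abs_of_nonneg ht0, hdx]
      rw [hnorm, hTx]
      exact key t ht0 (Or.inl htd)
    · -- far regime
      have hTx : T x = x - (1 : ℝ) • (x - P x) := by
        rw [(hT x).1 h2, one_smul, sub_sub_cancel]
      have hnorm : ‖T x - x‖ = 1 * d := by
        have e : T x - x = -((1 : ℝ) • (x - P x)) := by rw [hTx]; abel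
        rw [e, norm_neg, norm_smul, Real.norm_eq_abs, abs_one, hdx]
      rw [hnorm, hTx]
      exact key 1 zero_le_one (Or.inl (by linarith))


end CycIPHelpers
/-- main result: weak convergence.
CycIP setup: `I` finite, partitioned into `I₀` (intrepid projectors onto
enlargements) and `I₁ = I₀ᶜ` (relaxed projectors).  Suppose
`⋂_{i∈I₁} C i ∩ ⋂_{i∈I₀} int (C i) ≠ ∅` and the control is quasicyclic with
quasiperiod `M ≥ 1`.  Then the generated sequence converges weakly to some
point of `C := ⋂ i, C i`. -/
theorem cycIP_main_weak_convergence
    {X : Type*} [NormedAddCommGroup X] [InnerProductSpace ℝ X] [CompleteSpace X]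
    {ι : Type*} [Fintype ι] [Nonempty ι] (I₀ : Set ι)
    (C : ι → Set X)
    (hC : ∀ i, (C i).Nonempty ∧ IsClosed (C i) ∧ Convex ℝ (C i))
    (Z : ι → Set X) (β : ι → ℝ) (PZ : ι → X → X)
    (hI₀ : ∀ i ∈ I₀, (Z i).Nonempty ∧ IsClosed (Z i) ∧ Convex ℝ (Z i) ∧
      0 < β i ∧ C i = {x : X | Metric.infDist x (Z i) ≤ β i} ∧
      ∀ x : X, PZ i x ∈ Z i ∧ dist x (PZ i x) = Metric.infDist x (Z i))
    (lam : ι → ℝ) (PC : ι → X → X)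
    (hI₁ : ∀ i ∉ I₀, lam i ∈ Set.Ioo (0 : ℝ) 2 ∧
      ∀ x : X, PC i x ∈ C i ∧ dist x (PC i x) = Metric.infDist x (C i))
    (T : ι → X → X)
    (hT₀ : ∀ i ∈ I₀, ∀ x : X,
      (2 * β i ≤ Metric.infDist x (Z i) → T i x = PZ i x) ∧
      (Metric.infDist x (Z i) ≤ β i → T i x = x) ∧
      (β i < Metric.infDist x (Z i) → Metric.infDist x (Z i) < 2 * β i →
        T i x = x + (1 - Metric.infDist x (Z i) / β i) • (x - PZ i x)))
    (hT₁ : ∀ i ∉ I₀, ∀ x : X, T i x = (1 - lam i) • x + lam i • PC i x)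
    (hfeas : ((⋂ i ∈ I₀ᶜ, C i) ∩ ⋂ i ∈ I₀, interior (C i)).Nonempty)
    (sel : ℕ → ι) (hsel : ∀ i, {k : ℕ | sel k = i}.Infinite)
    (M : ℕ) (hM : 1 ≤ M)
    (hqc : ∀ k : ℕ, ∀ i : ι, ∃ j < M, sel (k + j) = i)
    (x : ℕ → X) (hx : ∀ k : ℕ, x (k + 1) = T (sel k) (x k)) :
    ∃ xbar ∈ ⋂ i, C i, ∀ u : X,
      Filter.Tendsto (fun k => ⟪x k, u⟫) Filter.atTop (nhds ⟪xbar, u⟫) := by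
  classical
  obtain ⟨z, hz⟩ := hfeas
  have hzC0 : ∀ i ∈ I₀, z ∈ interior (C i) := by
    intro i hi
    have h1 := hz.2
    rw [Set.mem_iInter₂] at h1
    exact h1 i hi
  have hzC1 : ∀ i ∉ I₀, z ∈ C i := by
    intro i hi
    have h1 := hz.1
    rw [Set.mem_iInter₂] at h1
    exact h1 i hi
  have hzC : ∀ i, z ∈ C i := by
    intro i
    by_cases hi : i ∈ I₀
    · exact interior_subset (hzC0 i hi)
    · exact hzC1 i hi
  -- interior slack for the intrepid indices
  have hslack : ∀ i, ∃ e : ℝ, 0 < e ∧ (i ∈ I₀ → Metric.infDist z (Z i) ≤ β i - e) := by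
    intro i
    by_cases hi : i ∈ I₀
    · obtain ⟨hZne, hZcl, hZconv, hβ, hCeq, hPZ⟩ := hI₀ i hi
      have hzint := hzC0 i hi
      rw [hCeq] at hzint
      have h1 : {x : X | Metric.infDist x (Z i) ≤ β i} ∈ 𝓝 z :=
        mem_interior_iff_mem_nhds.mp hzint
      obtain ⟨r, hr0, hball⟩ := Metric.mem_nhds_iff.mp h1
      refine ⟨min (r / 2) (β i), lt_min (by linarith) hβ, fun _ =>
        cycIP_slack_of_ball hZconv hPZ hβ hr0 hball⟩
    · exact ⟨1, one_pos, fun h => absurd h hi⟩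
  choose e he0 heslack using hslack
  -- decrease constants for the relaxed indices
  have hmdef : ∀ i, ∃ m : ℝ, 0 < m ∧ (i ∉ I₀ → m = (2 - lam i) / lam i) := by
    intro i
    by_cases hi : i ∈ I₀
    · exact ⟨1, one_pos, fun h => absurd hi h⟩
    · obtain ⟨⟨hl0, hl2⟩, _⟩ := hI₁ i hi
      exact ⟨(2 - lam i) / lam i, div_pos (by linarith) hl0, fun _ => rfl⟩
  choose m hm0 hmval using hmdef
  -- displacement controls the distance to C i
  have hKdef : ∀ i, ∃ K : ℝ, 1 ≤ K ∧
      ∀ x0 : X, Metric.infDist x0 (C i) ≤ K * ‖T i x0 - x0‖ := by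
    intro i
    by_cases hi : i ∈ I₀
    · obtain ⟨hZne, hZcl, hZconv, hβ, hCeq, hPZ⟩ := hI₀ i hi
      refine ⟨1, le_refl 1, fun x0 => ?_⟩
      rw [hCeq, one_mul]
      exact cycIP_intrepid_dist hβ hPZ (hT₀ i hi) x0
    · obtain ⟨⟨hl0, hl2⟩, hPCi⟩ := hI₁ i hi
      refine ⟨max 1 (1 / lam i), le_max_left _ _, fun x0 => ?_⟩
      have h1 := (cycIP_relaxed_step (hC i).2.2 hPCi hl0 hl2 (hT₁ i hi) x0).1
      have h2 : Metric.infDist x0 (C i) = (1 / lam i) * ‖T i x0 - x0‖ := by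
        rw [h1]
        field_simp
      rw [h2]
      exact mul_le_mul_of_nonneg_right (le_max_right _ _) (norm_nonneg _)
  choose K hK1 hKdist using hKdef
  -- global constants
  have huniv : (Finset.univ : Finset ι).Nonempty := Finset.univ_nonempty
  set εbar : ℝ := Finset.univ.inf' huniv e with hεbardef
  have hεbar0 : 0 < εbar := (Finset.lt_inf'_iff huniv).mpr fun i _ => he0 i
  have hεbarle : ∀ i, εbar ≤ e i := fun i => Finset.inf'_le e (Finset.mem_univ i)
  set μbar : ℝ := Finset.univ.inf' huniv m with hμbardef
  have hμbar0 : 0 < μbar := (Finset.lt_inf'_iff huniv).mpr fun i _ => hm0 i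
  have hμbarle : ∀ i, μbar ≤ m i := fun i => Finset.inf'_le m (Finset.mem_univ i)
  set Kbar : ℝ := Finset.univ.sup' huniv K with hKbardef
  have hKbarle : ∀ i, K i ≤ Kbar := fun i => Finset.le_sup' K (Finset.mem_univ i)
  have hKbar1 : 1 ≤ Kbar := le_trans (hK1 (Classical.arbitrary ι)) (hKbarle _)
  have hKbar0 : (0 : ℝ) ≤ Kbar := le_trans zero_le_one hKbar1
  -- Fejér monotonicity with respect to points of C
  have hFej : ∀ y : X, (∀ i, y ∈ C i) → ∀ k, ‖x (k + 1) - y‖ ^ 2 ≤ ‖x k - y‖ ^ 2 := by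
    intro y hy k
    rw [hx k]
    by_cases hi : sel k ∈ I₀
    · obtain ⟨hZne, hZcl, hZconv, hβ, hCeq, hPZ⟩ := hI₀ (sel k) hi
      have hyZ : Metric.infDist y (Z (sel k)) ≤ β (sel k) - 0 := by
        rw [sub_zero]
        have := hy (sel k)
        rwa [hCeq] at this
      have h1 := cycIP_intrepid_step hZconv hβ hPZ (hT₀ (sel k) hi) le_rfl hyZ (x k)
      have h2 : (0 : ℝ) ≤ 2 * 0 * ‖T (sel k) (x k) - x k‖ := by simp
      linarith
    · obtain ⟨⟨hl0, hl2⟩, hPCi⟩ := hI₁ (sel k) hi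
      have h1 := (cycIP_relaxed_step (hC (sel k)).2.2 hPCi hl0 hl2
        (hT₁ (sel k) hi) (x k)).2 y (hy (sel k))
      have h2 : (0 : ℝ) ≤ (2 - lam (sel k)) / lam (sel k) * ‖T (sel k) (x k) - x k‖ ^ 2 := by
        apply mul_nonneg (div_nonneg (by linarith) (le_of_lt hl0)) (sq_nonneg _)
      linarith
  -- quantitative decrease at the feasibility point z
  have hZdec : ∀ k, 2 * εbar * ‖x (k + 1) - x k‖ ≤ ‖x k - z‖ ^ 2 - ‖x (k + 1) - z‖ ^ 2 ∨
      μbar * ‖x (k + 1) - x k‖ ^ 2 ≤ ‖x k - z‖ ^ 2 - ‖x (k + 1) - z‖ ^ 2 := by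
    intro k
    by_cases hi : sel k ∈ I₀
    · left
      obtain ⟨hZne, hZcl, hZconv, hβ, hCeq, hPZ⟩ := hI₀ (sel k) hi
      have h1 := cycIP_intrepid_step hZconv hβ hPZ (hT₀ (sel k) hi)
        (le_of_lt (he0 (sel k))) (heslack (sel k) hi) (x k)
      rw [← hx k] at h1
      have hD0 : (0 : ℝ) ≤ ‖x (k + 1) - x k‖ := norm_nonneg _
      have h2 : 2 * εbar * ‖x (k + 1) - x k‖ ≤ 2 * e (sel k) * ‖x (k + 1) - x k‖ := by
        apply mul_le_mul_of_nonneg_right _ hD0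
        linarith [hεbarle (sel k)]
      linarith
    · right
      obtain ⟨⟨hl0, hl2⟩, hPCi⟩ := hI₁ (sel k) hi
      have h1 := (cycIP_relaxed_step (hC (sel k)).2.2 hPCi hl0 hl2
        (hT₁ (sel k) hi) (x k)).2 z (hzC (sel k))
      rw [← hx k] at h1
      have h2 : μbar ≤ (2 - lam (sel k)) / lam (sel k) := by
        rw [← hmval (sel k) hi]
        exact hμbarle (sel k)
      have h3 : μbar * ‖x (k + 1) - x k‖ ^ 2 ≤
          (2 - lam (sel k)) / lam (sel k) * ‖x (k + 1) - x k‖ ^ 2 :=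
        mul_le_mul_of_nonneg_right h2 (sq_nonneg _)
      linarith
  -- displacement controls distance to the current set
  have hdistD : ∀ k, Metric.infDist (x k) (C (sel k)) ≤ Kbar * ‖x (k + 1) - x k‖ := by
    intro k
    have h1 := hKdist (sel k) (x k)
    rw [← hx k] at h1
    exact le_trans h1 (mul_le_mul_of_nonneg_right (hKbarle (sel k)) (norm_nonneg _))
  -- the Fejér sequence of squared distances to z converges
  have hAanti : Antitone fun k => ‖x k - z‖ ^ 2 :=
    antitone_nat_of_succ_le fun k => hFej z hzC k
  have hAtend : Filter.Tendsto (fun k => ‖x k - z‖ ^ 2) Filter.atTop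
      (𝓝 (⨅ k, ‖x k - z‖ ^ 2)) := by
    apply tendsto_atTop_ciInf hAanti
    refine ⟨0, ?_⟩
    rintro _ ⟨k, rfl⟩
    positivity
  have hdiff : Filter.Tendsto (fun k => ‖x k - z‖ ^ 2 - ‖x (k + 1) - z‖ ^ 2)
      Filter.atTop (𝓝 0) := by
    have h2 : Filter.Tendsto (fun k => ‖x (k + 1) - z‖ ^ 2) Filter.atTop
        (𝓝 (⨅ k, ‖x k - z‖ ^ 2)) := hAtend.comp (tendsto_add_atTop_nat 1)
    simpa using hAtend.sub h2
  -- asymptotic regularity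
  have hDtend : Filter.Tendsto (fun k => ‖x (k + 1) - x k‖) Filter.atTop (𝓝 0) := by
    have hbound : ∀ k, ‖x (k + 1) - x k‖ ≤
        (‖x k - z‖ ^ 2 - ‖x (k + 1) - z‖ ^ 2) / (2 * εbar) +
        Real.sqrt ((‖x k - z‖ ^ 2 - ‖x (k + 1) - z‖ ^ 2) / μbar) := by
      intro k
      have hs0 : 0 ≤ ‖x k - z‖ ^ 2 - ‖x (k + 1) - z‖ ^ 2 := by
        have h9 : ‖x (k + 1) - z‖ ^ 2 ≤ ‖x k - z‖ ^ 2 := hAanti (Nat.le_succ k)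
        linarith
      rcases hZdec k with h | h
      · have h1 : ‖x (k + 1) - x k‖ ≤ (‖x k - z‖ ^ 2 - ‖x (k + 1) - z‖ ^ 2) / (2 * εbar) := by
          rw [le_div_iff₀ (by positivity)]
          linarith
        have h2 : 0 ≤ Real.sqrt ((‖x k - z‖ ^ 2 - ‖x (k + 1) - z‖ ^ 2) / μbar) :=
          Real.sqrt_nonneg _
        linarith
      · have h1 : ‖x (k + 1) - x k‖ ≤
            Real.sqrt ((‖x k - z‖ ^ 2 - ‖x (k + 1) - z‖ ^ 2) / μbar) := by
          rw [Real.le_sqrt (norm_nonneg _) (by positivity)]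
          rw [le_div_iff₀ hμbar0]
          linarith
        have h2 : 0 ≤ (‖x k - z‖ ^ 2 - ‖x (k + 1) - z‖ ^ 2) / (2 * εbar) := by positivity
        linarith
    apply squeeze_zero (fun k => norm_nonneg _) hbound
    have t1 : Filter.Tendsto
        (fun k => (‖x k - z‖ ^ 2 - ‖x (k + 1) - z‖ ^ 2) / (2 * εbar))
        Filter.atTop (𝓝 0) := by
      simpa using hdiff.div_const (2 * εbar)
    have t2 : Filter.Tendsto
        (fun k => Real.sqrt ((‖x k - z‖ ^ 2 - ‖x (k + 1) - z‖ ^ 2) / μbar))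
        Filter.atTop (𝓝 0) := by
      have h3 : Filter.Tendsto (fun k => (‖x k - z‖ ^ 2 - ‖x (k + 1) - z‖ ^ 2) / μbar)
          Filter.atTop (𝓝 0) := by
        simpa using hdiff.div_const μbar
      have h4 := (Real.continuous_sqrt.tendsto 0).comp h3
      simpa [Real.sqrt_zero, Function.comp_def] using h4
    simpa using t1.add t2
  -- distances to all the sets C i tend to zero
  have hdistC : ∀ i, Filter.Tendsto (fun k => Metric.infDist (x k) (C i))
      Filter.atTop (𝓝 0) := by
    intro i
    have hb : ∀ k, Metric.infDist (x k) (C i) ≤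
        (Kbar + 1) * ∑ l ∈ Finset.range M, ‖x (k + l + 1) - x (k + l)‖ := by
      intro k
      obtain ⟨j, hjM, hj⟩ := hqc k i
      have h1 : Metric.infDist (x k) (C i) ≤
          Metric.infDist (x (k + j)) (C i) + dist (x k) (x (k + j)) :=
        Metric.infDist_le_infDist_add_dist
      have h2 : Metric.infDist (x (k + j)) (C i) ≤ Kbar * ‖x (k + j + 1) - x (k + j)‖ := by
        have := hdistD (k + j)
        rwa [hj] at this
      have h3 : dist (x k) (x (k + j)) ≤
          ∑ l ∈ Finset.range j, ‖x (k + l + 1) - x (k + l)‖ := by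
        have h4 := dist_le_range_sum_dist (fun l => x (k + l)) j
        simp only [add_zero] at h4
        refine le_trans h4 (le_of_eq (Finset.sum_congr rfl fun l _ => ?_))
        rw [dist_eq_norm, norm_sub_rev]
        exact rfl
      have h5 : ∑ l ∈ Finset.range j, ‖x (k + l + 1) - x (k + l)‖ ≤
          ∑ l ∈ Finset.range M, ‖x (k + l + 1) - x (k + l)‖ := by
        apply Finset.sum_le_sum_of_subset_of_nonneg
          (Finset.range_subset_range.mpr (le_of_lt hjM))
        intro l _ _
        exact norm_nonneg _
      have h6 : ‖x (k + j + 1) - x (k + j)‖ ≤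
          ∑ l ∈ Finset.range M, ‖x (k + l + 1) - x (k + l)‖ :=
        Finset.single_le_sum (f := fun l => ‖x (k + l + 1) - x (k + l)‖)
          (fun l _ => norm_nonneg _) (Finset.mem_range.mpr hjM)
      have h7 : Kbar * ‖x (k + j + 1) - x (k + j)‖ ≤
          Kbar * ∑ l ∈ Finset.range M, ‖x (k + l + 1) - x (k + l)‖ :=
        mul_le_mul_of_nonneg_left h6 hKbar0
      have h8 := le_trans h1 (add_le_add (le_trans h2 h7) (le_trans h3 h5))
      linarith
    apply squeeze_zero (fun k => Metric.infDist_nonneg) hb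
    have hsum : Filter.Tendsto
        (fun k => ∑ l ∈ Finset.range M, ‖x (k + l + 1) - x (k + l)‖)
        Filter.atTop (𝓝 0) := by
      have h0 : ∀ l ∈ Finset.range M, Filter.Tendsto
          (fun k => ‖x (k + l + 1) - x (k + l)‖) Filter.atTop (𝓝 0) := by
        intro l _
        have := hDtend.comp (tendsto_add_atTop_nat l)
        simpa [Function.comp_def] using this
      have := tendsto_finset_sum (Finset.range M) h0
      simpa using this
    simpa using hsum.const_mul (Kbar + 1)
  -- boundedness
  have hbdd : ∀ k, ‖x k‖ ≤ ‖x 0 - z‖ + ‖z‖ := by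
    intro k
    have h1 : ‖x k - z‖ ^ 2 ≤ ‖x 0 - z‖ ^ 2 := hAanti (Nat.zero_le k)
    have h2 : ‖x k - z‖ ≤ ‖x 0 - z‖ := by
      nlinarith [norm_nonneg (x k - z), norm_nonneg (x 0 - z)]
    calc ‖x k‖ = ‖x k - z + z‖ := by rw [sub_add_cancel]
      _ ≤ ‖x k - z‖ + ‖z‖ := norm_add_le _ _
      _ ≤ ‖x 0 - z‖ + ‖z‖ := by linarith
  -- inner products against differences of points of C converge
  have hinnerconv : ∀ p, (∀ i, p ∈ C i) → ∀ q, (∀ i, q ∈ C i) →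
      ∃ l : ℝ, Filter.Tendsto (fun k => ⟪x k, p - q⟫) Filter.atTop (𝓝 l) := by
    intro p hp q hq
    have hp1 : Antitone fun k => ‖x k - p‖ ^ 2 :=
      antitone_nat_of_succ_le fun k => hFej p hp k
    have hq1 : Antitone fun k => ‖x k - q‖ ^ 2 :=
      antitone_nat_of_succ_le fun k => hFej q hq k
    have hp2 : Filter.Tendsto (fun k => ‖x k - p‖ ^ 2) Filter.atTop
        (𝓝 (⨅ k, ‖x k - p‖ ^ 2)) := by
      apply tendsto_atTop_ciInf hp1
      refine ⟨0, ?_⟩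
      rintro _ ⟨k, rfl⟩
      positivity
    have hq2 : Filter.Tendsto (fun k => ‖x k - q‖ ^ 2) Filter.atTop
        (𝓝 (⨅ k, ‖x k - q‖ ^ 2)) := by
      apply tendsto_atTop_ciInf hq1
      refine ⟨0, ?_⟩
      rintro _ ⟨k, rfl⟩
      positivity
    refine ⟨((⨅ k, ‖x k - q‖ ^ 2) - (⨅ k, ‖x k - p‖ ^ 2) + ‖p‖ ^ 2 - ‖q‖ ^ 2) / 2, ?_⟩
    have hid : ∀ k : ℕ, ⟪x k, p - q⟫ =
        (‖x k - q‖ ^ 2 - ‖x k - p‖ ^ 2 + ‖p‖ ^ 2 - ‖q‖ ^ 2) / 2 := by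
      intro k
      rw [inner_sub_right, norm_sub_sq_real, norm_sub_sq_real]
      ring
    simp_rw [hid]
    exact (((hq2.sub hp2).add_const (‖p‖ ^ 2)).sub_const (‖q‖ ^ 2)).div_const 2
  -- the weak cluster point along an ultrafilter refining atTop
  set U : Ultrafilter ℕ := Ultrafilter.of Filter.atTop with hUdef
  have hU : (U : Filter ℕ) ≤ Filter.atTop := Ultrafilter.of_le _
  obtain ⟨xbar, hxbar⟩ := cycIP_ultrafilter_cluster U x hbdd
  have hxbarC : ∀ i, xbar ∈ C i := fun i =>
    cycIP_mem_of_cluster U hU x hxbar (hC i).1 (hC i).2.1 (hC i).2.2 (hdistC i)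
  refine ⟨xbar, Set.mem_iInter.mpr hxbarC, ?_⟩
  intro u
  by_contra hcon
  obtain ⟨ε, hε, hfr⟩ := cycIP_not_tendsto hcon
  have hne2 : Filter.NeBot (Filter.atTop ⊓
      Filter.principal {k : ℕ | ε ≤ |⟪x k, u⟫ - ⟪xbar, u⟫|}) :=
    Filter.frequently_iff_neBot.mp hfr
  set V : Ultrafilter ℕ := Ultrafilter.of (Filter.atTop ⊓
    Filter.principal {k : ℕ | ε ≤ |⟪x k, u⟫ - ⟪xbar, u⟫|}) with hVdef
  have hV1 : (V : Filter ℕ) ≤ Filter.atTop ⊓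
      Filter.principal {k : ℕ | ε ≤ |⟪x k, u⟫ - ⟪xbar, u⟫|} := Ultrafilter.of_le _
  have hVtop : (V : Filter ℕ) ≤ Filter.atTop := hV1.trans inf_le_left
  have hVs : {k : ℕ | ε ≤ |⟪x k, u⟫ - ⟪xbar, u⟫|} ∈ (V : Filter ℕ) :=
    Filter.le_principal_iff.mp (hV1.trans inf_le_right)
  obtain ⟨ybar, hybar⟩ := cycIP_ultrafilter_cluster V x hbdd
  have hybarC : ∀ i, ybar ∈ C i := fun i =>
    cycIP_mem_of_cluster V hVtop x hybar (hC i).1 (hC i).2.1 (hC i).2.2 (hdistC i)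
  obtain ⟨l, hl⟩ := hinnerconv xbar hxbarC ybar hybarC
  have l1 : l = ⟪xbar, xbar - ybar⟫ :=
    tendsto_nhds_unique (hl.mono_left hU) (hxbar (xbar - ybar))
  have l2 : l = ⟪ybar, xbar - ybar⟫ :=
    tendsto_nhds_unique (hl.mono_left hVtop) (hybar (xbar - ybar))
  have h0 : ⟪xbar - ybar, xbar - ybar⟫ = 0 := by
    rw [inner_sub_left, ← l1, ← l2]
    ring
  have heq : xbar = ybar := sub_eq_zero.mp (inner_self_eq_zero.mp h0)
  have h1 : Filter.Tendsto (fun k => |⟪x k, u⟫ - ⟪xbar, u⟫|) (V : Filter ℕ) (𝓝 0) := by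
    have h2 := hybar u
    rw [← heq] at h2
    have h3 := (h2.sub_const ⟪xbar, u⟫).abs
    simpa using h3
  have h4 : ε ≤ 0 := ge_of_tendsto h1 hVs
  linarith
end

section
/- Consider the CycIP setup in a real Hilbert space X, and suppose that ⋂_{i∈I₁} C_i ∩ ⋂_{i∈I₀} int C_i ≠ ∅, that the control is quasicyclic with some quasiperiod M ≥ 1, and that I₁ is either empty or a singleton. Then the sequence generated by x_{k+1} := T_{i(k)} x_k from any x₀ ∈ X converges strongly (in norm) to some point of C := ⋂_{i∈I} C_i. -/
open scoped RealInnerProductSpace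
open Metric Filter

section CycIPAux
variable {X : Type*} [NormedAddCommGroup X] [InnerProductSpace ℝ X]

/-- Projection variational inequality. -/
lemma cycip_proj_inner_nonpos {s : Set X} (hs : Convex ℝ s) {x p : X} (hp : p ∈ s)
    (hd : dist x p = Metric.infDist x s) {q : X} (hq : q ∈ s) :
    ⟪x - p, q - p⟫ ≤ 0 := by
  have h1 : ‖x - p‖ = ⨅ w : s, ‖x - w‖ := by
    rw [← dist_eq_norm, hd, Metric.infDist_eq_iInf]
    simp only [dist_eq_norm]
  exact ((norm_eq_iInf_iff_real_inner_le_zero hs hp).mp h1) q hq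

/-- Moving towards the projection by `t` is quasinonexpansive w.r.t. points of the
`β`-enlargement, provided `t * d ≤ 2 * (d - β)`. -/
lemma cycip_intrepid_step {Z : Set X} (hZ : Convex ℝ Z) {β : ℝ}
    {x p c q : X} (hp : p ∈ Z) (hdp : dist x p = Metric.infDist x Z)
    (hq : q ∈ Z) (hcq : dist c q ≤ β)
    {t : ℝ} (ht0 : 0 ≤ t) (ht2 : t * ‖x - p‖ ≤ 2 * (‖x - p‖ - β)) :
    ‖(x + t • (p - x)) - c‖ ≤ ‖x - c‖ := by
  have hip : ⟪x - p, c - p⟫ ≤ ‖x - p‖ * β := by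
    have hsplit : c - p = (c - q) + (q - p) := by abel
    have h1 : ⟪x - p, c - q⟫ ≤ ‖x - p‖ * ‖c - q‖ := real_inner_le_norm _ _
    have h2 : ⟪x - p, q - p⟫ ≤ 0 := cycip_proj_inner_nonpos hZ hp hdp hq
    have h3 : ‖c - q‖ ≤ β := by rwa [← dist_eq_norm]
    have h4 : ‖x - p‖ * ‖c - q‖ ≤ ‖x - p‖ * β :=
      mul_le_mul_of_nonneg_left h3 (norm_nonneg _)
    calc ⟪x - p, c - p⟫ = ⟪x - p, c - q⟫ + ⟪x - p, q - p⟫ := by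
          rw [hsplit, inner_add_right]
      _ ≤ ‖x - p‖ * β := by linarith
  have hxc : ⟪x - c, x - p⟫ = ‖x - p‖ ^ 2 - ⟪x - p, c - p⟫ := by
    have hsplit : x - c = (x - p) - (c - p) := by abel
    rw [hsplit, inner_sub_left, real_inner_self_eq_norm_sq, real_inner_comm]
  have key : ‖(x + t • (p - x)) - c‖ ^ 2 ≤ ‖x - c‖ ^ 2 := by
    have hexp : (x + t • (p - x)) - c = (x - c) - t • (x - p) := by
      rw [smul_sub, smul_sub]; abel
    rw [hexp, norm_sub_sq_real, real_inner_smul_right, norm_smul,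
      Real.norm_eq_abs, abs_of_nonneg ht0, mul_pow]
    have e2 : (t * ‖x - p‖) * (t * ‖x - p‖) ≤ (2 * (‖x - p‖ - β)) * (t * ‖x - p‖) :=
      mul_le_mul_of_nonneg_right ht2 (mul_nonneg ht0 (norm_nonneg _))
    have e3 : t * ⟪x - p, c - p⟫ ≤ t * (‖x - p‖ * β) :=
      mul_le_mul_of_nonneg_left hip ht0
    nlinarith [norm_nonneg (x - p), mul_nonneg ht0 (norm_nonneg (x - p))]
  nlinarith [norm_nonneg ((x + t • (p - x)) - c), norm_nonneg (x - c)]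

end CycIPAux

/-- main result: strong convergence when `I₁` is small.
CycIP setup.  Suppose `⋂_{i∈I₁} C i ∩ ⋂_{i∈I₀} int (C i) ≠ ∅`, the control is
quasicyclic with quasiperiod `M ≥ 1`, and `I₁ = I₀ᶜ` is empty or a singleton.
Then the generated sequence converges strongly (in norm) to some point of
`C := ⋂ i, C i`. -/
theorem cycIP_main_strong_convergence
    {X : Type*} [NormedAddCommGroup X] [InnerProductSpace ℝ X] [CompleteSpace X]
    {ι : Type*} [Fintype ι] [Nonempty ι] (I₀ : Set ι)
    (C : ι → Set X)
    (hC : ∀ i, (C i).Nonempty ∧ IsClosed (C i) ∧ Convex ℝ (C i))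
    (Z : ι → Set X) (β : ι → ℝ) (PZ : ι → X → X)
    (hI₀ : ∀ i ∈ I₀, (Z i).Nonempty ∧ IsClosed (Z i) ∧ Convex ℝ (Z i) ∧
      0 < β i ∧ C i = {x : X | Metric.infDist x (Z i) ≤ β i} ∧
      ∀ x : X, PZ i x ∈ Z i ∧ dist x (PZ i x) = Metric.infDist x (Z i))
    (lam : ι → ℝ) (PC : ι → X → X)
    (hI₁ : ∀ i ∉ I₀, lam i ∈ Set.Ioo (0 : ℝ) 2 ∧
      ∀ x : X, PC i x ∈ C i ∧ dist x (PC i x) = Metric.infDist x (C i))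
    (T : ι → X → X)
    (hT₀ : ∀ i ∈ I₀, ∀ x : X,
      (2 * β i ≤ Metric.infDist x (Z i) → T i x = PZ i x) ∧
      (Metric.infDist x (Z i) ≤ β i → T i x = x) ∧
      (β i < Metric.infDist x (Z i) → Metric.infDist x (Z i) < 2 * β i →
        T i x = x + (1 - Metric.infDist x (Z i) / β i) • (x - PZ i x)))
    (hT₁ : ∀ i ∉ I₀, ∀ x : X, T i x = (1 - lam i) • x + lam i • PC i x)
    (hfeas : ((⋂ i ∈ I₀ᶜ, C i) ∩ ⋂ i ∈ I₀, interior (C i)).Nonempty)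
    (sel : ℕ → ι) (hsel : ∀ i, {k : ℕ | sel k = i}.Infinite)
    (M : ℕ) (hM : 1 ≤ M)
    (hqc : ∀ k : ℕ, ∀ i : ι, ∃ j < M, sel (k + j) = i)
    (hI₁small : (I₀ᶜ : Set ι).Subsingleton)
    (x : ℕ → X) (hx : ∀ k : ℕ, x (k + 1) = T (sel k) (x k)) :
    ∃ xbar ∈ ⋂ i, C i, Filter.Tendsto x Filter.atTop (nhds xbar) := by
  classical
  obtain ⟨z, hz⟩ := hfeas
  have hz1 : ∀ i ∉ I₀, z ∈ C i := by
    intro i hi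
    have h := hz.1
    simp only [Set.mem_iInter] at h
    exact h i hi
  have hz2 : ∀ i ∈ I₀, z ∈ interior (C i) := by
    intro i hi
    have h := hz.2
    simp only [Set.mem_iInter] at h
    exact h i hi
  have hOpen : IsOpen (⋂ i ∈ I₀, interior (C i)) :=
    Set.Finite.isOpen_biInter (Set.toFinite I₀) (fun i _ => isOpen_interior)
  have hzmem : z ∈ ⋂ i ∈ I₀, interior (C i) := by
    simp only [Set.mem_iInter]; exact hz2
  obtain ⟨ε, hε, hball⟩ := Metric.isOpen_iff.mp hOpen z hzmem
  have hballC : ∀ c : X, dist c z < ε → ∀ i ∈ I₀, c ∈ C i := by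
    intro c hc i hi
    have h := hball hc
    simp only [Set.mem_iInter] at h
    exact interior_subset (h i hi)
  have hzC : ∀ i, z ∈ C i := fun i => by
    by_cases hi : i ∈ I₀
    · exact interior_subset (hz2 i hi)
    · exact hz1 i hi
  -- Step analysis for indices in `I₀` (intrepid projectors).
  have quasiA : ∀ k, sel k ∈ I₀ →
      x (k+1) ∈ C (sel k) ∧ ∀ c ∈ C (sel k), ‖x (k+1) - c‖ ≤ ‖x k - c‖ := by
    intro k hk
    set i := sel k with hidef
    obtain ⟨hZne, hZcl, hZcv, hβ, hCi, hPZ⟩ := hI₀ i hk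
    set d := Metric.infDist (x k) (Z i) with hd
    set p := PZ i (x k) with hp
    have hpZ : p ∈ Z i := (hPZ (x k)).1
    have hdp : dist (x k) p = d := (hPZ (x k)).2
    have hdn : ‖x k - p‖ = d := by rw [← dist_eq_norm]; exact hdp
    have hd0 : 0 ≤ d := by rw [← hdp]; exact dist_nonneg
    have hquasi : ∀ t : ℝ, 0 ≤ t → t * d ≤ 2 * (d - β i) →
        ∀ c ∈ C i, ‖(x k + t • (p - x k)) - c‖ ≤ ‖x k - c‖ := by
      intro t ht0 ht2 c hc
      have hcC : Metric.infDist c (Z i) ≤ β i := by rw [hCi] at hc; exact hc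
      have hqc2 : dist c (PZ i c) ≤ β i := by rw [(hPZ c).2]; exact hcC
      exact cycip_intrepid_step hZcv hpZ hdp (hPZ c).1 hqc2 ht0 (by rw [hdn]; exact ht2)
    rcases le_or_gt d (β i) with hcase | hcase
    · have hxk : x (k+1) = x k := by rw [hx k, (hT₀ i hk (x k)).2.1 hcase]
      refine ⟨?_, ?_⟩
      · rw [hxk, hCi]; exact hcase
      · intro c _; rw [hxk]
    · rcases le_or_gt (2 * β i) d with hcase2 | hcase2
      · -- far case: `x (k+1) = p`
        have hxk : x (k+1) = p := by rw [hx k, (hT₀ i hk (x k)).1 hcase2]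
        refine ⟨?_, ?_⟩
        · rw [hxk, hCi]
          have h0 : Metric.infDist p (Z i) = 0 := Metric.infDist_zero_of_mem hpZ
          have : Metric.infDist p (Z i) ≤ β i := by rw [h0]; linarith
          exact this
        · intro c hc
          have h := hquasi 1 zero_le_one (by linarith) c hc
          rwa [show x k + (1:ℝ) • (p - x k) = p by module, ← hxk] at h
      · -- middle case
        have hxk : x (k+1) = x k + (1 - d / β i) • (x k - p) := by
          rw [hx k, (hT₀ i hk (x k)).2.2 hcase hcase2]
        have ht0 : (0:ℝ) ≤ d / β i - 1 := by
          rw [le_sub_iff_add_le, zero_add, le_div_iff₀ hβ]; linarith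
        have hrd : (d / β i) * β i = d := div_mul_cancel₀ d hβ.ne'
        refine ⟨?_, ?_⟩
        · rw [hxk, hCi]
          have heq : x k + (1 - d / β i) • (x k - p) - p = (2 - d / β i) • (x k - p) := by
            module
          have hle : Metric.infDist (x k + (1 - d / β i) • (x k - p)) (Z i)
              ≤ dist (x k + (1 - d / β i) • (x k - p)) p :=
            Metric.infDist_le_dist_of_mem hpZ
          have hdist : dist (x k + (1 - d / β i) • (x k - p)) p = (2 - d / β i) * d := by
            rw [dist_eq_norm, heq, norm_smul, Real.norm_eq_abs, hdn,
              abs_of_nonneg (by nlinarith : (0:ℝ) ≤ 2 - d / β i)]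
          have hfin : (2 - d / β i) * d ≤ β i := by
            nlinarith [mul_nonneg (sq_nonneg (d / β i - 1)) hβ.le]
          have : Metric.infDist (x k + (1 - d / β i) • (x k - p)) (Z i) ≤ β i := by
            rw [hdist] at hle; linarith
          exact this
        · intro c hc
          have ht2 : (d / β i - 1) * d ≤ 2 * (d - β i) := by
            rw [div_sub_one hβ.ne', div_mul_eq_mul_div, div_le_iff₀ hβ]
            nlinarith [mul_nonneg (by linarith : (0:ℝ) ≤ d - β i)
              (by linarith : (0:ℝ) ≤ 2 * β i - d)]
          have h := hquasi (d / β i - 1) ht0 ht2 c hc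
          rwa [show x k + (d / β i - 1) • (p - x k)
              = x k + (1 - d / β i) • (x k - p) by module, ← hxk] at h
  -- Step analysis for indices outside `I₀` (relaxed projections).
  have quasiB : ∀ k, sel k ∉ I₀ →
      ‖x (k+1) - z‖ ≤ ‖x k - z‖ ∧
      Metric.infDist (x (k+1)) (C (sel k))
        ≤ |1 - lam (sel k)| * Metric.infDist (x k) (C (sel k)) ∧
      ‖x (k+1) - x k‖ ≤ 2 * Metric.infDist (x k) (C (sel k)) := by
    intro k hk
    set i := sel k with hidef
    obtain ⟨⟨hl0, hl2⟩, hPC⟩ := hI₁ i hk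
    set p := PC i (x k) with hp
    have hpC : p ∈ C i := (hPC (x k)).1
    have hdp : dist (x k) p = Metric.infDist (x k) (C i) := (hPC (x k)).2
    have hdn : ‖x k - p‖ = Metric.infDist (x k) (C i) := by
      rw [← dist_eq_norm]; exact hdp
    have hxk : x (k+1) = (1 - lam i) • x k + lam i • p := by rw [hx k, hT₁ i hk (x k)]
    refine ⟨?_, ?_, ?_⟩
    · -- Fejér step w.r.t. `z`
      have hub : ⟪x k - p, z - p⟫ ≤ 0 :=
        cycip_proj_inner_nonpos (hC i).2.2 hpC hdp (hzC i)
      have hform : x (k+1) - z = (x k - z) + lam i • (p - x k) := by rw [hxk]; module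
      have hinner : ⟪x k - z, p - x k⟫ = -‖x k - p‖^2 + ⟪x k - p, z - p⟫ := by
        have h1 : x k - z = (x k - p) + (p - z) := by abel
        have h2 : p - x k = -(x k - p) := by abel
        have h3 : (p : X) - z = -(z - p) := by abel
        rw [h1, h2, inner_add_left, inner_neg_right, inner_neg_right,
          real_inner_self_eq_norm_sq, h3, inner_neg_left, real_inner_comm]
        ring
      have hsq : ‖x (k+1) - z‖^2 ≤ ‖x k - z‖^2 := by
        rw [hform, norm_add_sq_real, real_inner_smul_right, norm_smul,
          Real.norm_eq_abs, abs_of_nonneg hl0.le, mul_pow]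
        have hnn : 0 ≤ ‖x k - p‖^2 := sq_nonneg _
        have h4 : ‖p - x k‖ = ‖x k - p‖ := norm_sub_rev _ _
        rw [h4]
        nlinarith [hinner, hub, hl0, hl2,
          mul_nonneg (mul_nonneg hl0.le (by linarith : (0:ℝ) ≤ 2 - lam i)) hnn,
          mul_nonneg hl0.le (neg_nonneg.mpr hub)]
      nlinarith [norm_nonneg (x (k+1) - z), norm_nonneg (x k - z)]
    · have hform : x (k+1) - p = (1 - lam i) • (x k - p) := by rw [hxk]; module
      have hle : Metric.infDist (x (k+1)) (C i) ≤ dist (x (k+1)) p :=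
        Metric.infDist_le_dist_of_mem hpC
      rw [dist_eq_norm, hform, norm_smul, Real.norm_eq_abs, hdn] at hle
      exact hle
    · have hform : x (k+1) - x k = lam i • (p - x k) := by rw [hxk]; module
      rw [hform, norm_smul, Real.norm_eq_abs, abs_of_nonneg hl0.le,
        norm_sub_rev, hdn]
      exact mul_le_mul_of_nonneg_right hl2.le Metric.infDist_nonneg
  -- monotonicity of the distance to `z`
  have dmono : ∀ k, ‖x (k+1) - z‖ ≤ ‖x k - z‖ := by
    intro k
    by_cases hk : sel k ∈ I₀
    · exact (quasiA k hk).2 z (hzC _)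
    · exact (quasiB k hk).1
  -- quantitative step estimate at `I₀`-steps
  have hA : ∀ k, sel k ∈ I₀ →
      ε * ‖x (k+1) - x k‖ ≤ ‖x k - z‖^2 - ‖x (k+1) - z‖^2 := by
    intro k hk
    by_cases hΔ : x (k+1) = x k
    · rw [hΔ]; simp
    · set Δ := x k - x (k+1) with hΔdef
      have hΔne : Δ ≠ 0 := sub_ne_zero.mpr (fun h => hΔ h.symm)
      have hΔn : ‖Δ‖ ≠ 0 := norm_ne_zero_iff.mpr hΔne
      set u := ((ε/2) / ‖Δ‖) • Δ with hu
      have hun : ‖u‖ = ε/2 := by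
        rw [hu, norm_smul, Real.norm_eq_abs,
          abs_of_nonneg (by positivity : (0:ℝ) ≤ (ε/2) / ‖Δ‖),
          div_mul_cancel₀ _ hΔn]
      have hcz : dist (z + u) z < ε := by
        rw [dist_eq_norm, add_sub_cancel_left, hun]; linarith
      have hcC : z + u ∈ C (sel k) := hballC _ hcz _ hk
      have hqle := (quasiA k hk).2 (z + u) hcC
      have hsq := pow_le_pow_left₀ (norm_nonneg _) hqle 2
      have h1 : x (k+1) - (z + u) = (x (k+1) - z) - u := by abel
      have h2 : x k - (z + u) = (x k - z) - u := by abel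
      rw [h1, h2, norm_sub_sq_real (x (k+1) - z) u, norm_sub_sq_real (x k - z) u] at hsq
      have h3 : ⟪x k - z, u⟫ - ⟪x (k+1) - z, u⟫ = ⟪Δ, u⟫ := by
        rw [← inner_sub_left]
        congr 1
        rw [hΔdef]; abel
      have h4 : ⟪Δ, u⟫ = (ε/2) * ‖Δ‖ := by
        rw [hu, real_inner_smul_right, real_inner_self_eq_norm_sq]
        field_simp
      have h5 : ‖x (k+1) - x k‖ = ‖Δ‖ := by rw [hΔdef, norm_sub_rev]
      rw [h5]
      linarith [hsq, h3, h4]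
  -- the two summable series of increments
  set a : ℕ → ℝ := fun k => if sel k ∈ I₀ then ‖x (k+1) - x k‖ else 0 with ha
  set b : ℕ → ℝ := fun k => if sel k ∈ I₀ then 0
    else Metric.infDist (x k) (C (sel k)) with hb
  have ha0 : ∀ k, 0 ≤ a k := by
    intro k; simp only [ha]
    split
    · exact norm_nonneg _
    · exact le_rfl
  have hb0 : ∀ k, 0 ≤ b k := by
    intro k; simp only [hb]
    split
    · exact le_rfl
    · exact Metric.infDist_nonneg
  have hasum : Summable a := by
    apply summable_of_sum_range_le ha0 (c := ‖x 0 - z‖^2 / ε)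
    intro n
    have key : ∀ k, ε * a k ≤ ‖x k - z‖^2 - ‖x (k+1) - z‖^2 := by
      intro k
      by_cases hk : sel k ∈ I₀
      · simp only [ha, if_pos hk]; exact hA k hk
      · simp only [ha, if_neg hk, mul_zero]
        have := dmono k
        nlinarith [norm_nonneg (x (k+1) - z), norm_nonneg (x k - z)]
    have h1 : ε * ∑ k ∈ Finset.range n, a k ≤ ‖x 0 - z‖^2 - ‖x n - z‖^2 := by
      rw [Finset.mul_sum]
      calc ∑ k ∈ Finset.range n, ε * a k
          ≤ ∑ k ∈ Finset.range n, (‖x k - z‖^2 - ‖x (k+1) - z‖^2) :=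
            Finset.sum_le_sum (fun k _ => key k)
        _ = ‖x 0 - z‖^2 - ‖x n - z‖^2 :=
            Finset.sum_range_sub' (fun k => ‖x k - z‖^2) n
    rw [le_div_iff₀ hε]
    nlinarith [sq_nonneg (‖x n - z‖)]
  have hbsum : Summable b := by
    by_cases hne : ∃ j, j ∉ I₀
    · obtain ⟨j, hj⟩ := hne
      have hjj : ∀ i, i ∉ I₀ → i = j := fun i hi => hI₁small hi hj
      set q := |1 - lam j| with hq
      have hq1 : q < 1 := by
        obtain ⟨hl0, hl2⟩ := (hI₁ j hj).1
        rw [hq, abs_lt]; constructor <;> linarith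
      have hq0 : (0:ℝ) ≤ q := abs_nonneg _
      set e : ℕ → ℝ := fun k => Metric.infDist (x k) (C j) with he
      have he0 : ∀ k, 0 ≤ e k := fun k => Metric.infDist_nonneg
      have step : ∀ k, (1 - q) * b k ≤ e k - e (k+1) + a k := by
        intro k
        by_cases hk : sel k ∈ I₀
        · have hlip : e (k+1) ≤ e k + ‖x (k+1) - x k‖ := by
            simp only [he]
            have h := Metric.infDist_le_infDist_add_dist
              (x := x (k+1)) (y := x k) (s := C j)
            rwa [dist_eq_norm] at h
          have hak : a k = ‖x (k+1) - x k‖ := by simp only [ha, if_pos hk]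
          have hbk : b k = 0 := by simp only [hb, if_pos hk]
          rw [hbk, hak, mul_zero]
          linarith
        · have hselk : sel k = j := hjj _ hk
          have h2 := (quasiB k hk).2.1
          rw [hselk] at h2
          have hbk : b k = e k := by simp only [hb, if_neg hk, hselk, he]
          have hak : a k = 0 := by simp only [ha, if_neg hk]
          rw [hbk, hak]
          have hqe : e (k+1) ≤ q * e k := by
            simp only [he]; rw [hq]; exact h2
          nlinarith [he0 k]
      apply summable_of_sum_range_le hb0 (c := (e 0 + (∑' k, a k)) / (1 - q))
      intro n
      have h1 : (1 - q) * ∑ k ∈ Finset.range n, b k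
          ≤ (e 0 - e n) + ∑ k ∈ Finset.range n, a k := by
        rw [Finset.mul_sum, ← Finset.sum_range_sub' e n, ← Finset.sum_add_distrib]
        exact Finset.sum_le_sum (fun k _ => step k)
      have h2 : ∑ k ∈ Finset.range n, a k ≤ ∑' k, a k :=
        Summable.sum_le_tsum _ (fun k _ => ha0 k) hasum
      rw [le_div_iff₀ (by linarith : (0:ℝ) < 1 - q), mul_comm]
      linarith [he0 n]
    · push_neg at hne
      have hbz : b = fun _ => 0 := funext fun k => by
        simp only [hb, if_pos (hne (sel k))]
      rw [hbz]
      exact summable_zero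
  -- the sequence is Cauchy
  have hmle : ∀ k, dist (x k) (x (k+1)) ≤ a k + 2 * b k := by
    intro k
    rw [dist_eq_norm, norm_sub_rev]
    by_cases hk : sel k ∈ I₀
    · have hak : a k = ‖x (k+1) - x k‖ := by simp only [ha, if_pos hk]
      have hbk : b k = 0 := by simp only [hb, if_pos hk]
      rw [hak, hbk]; linarith
    · have hak : a k = 0 := by simp only [ha, if_neg hk]
      have hbk : b k = Metric.infDist (x k) (C (sel k)) := by simp only [hb, if_neg hk]
      rw [hak, hbk]
      have h := (quasiB k hk).2.2
      linarith
  have hmsum : Summable (fun k => dist (x k) (x (k+1))) :=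
    Summable.of_nonneg_of_le (fun k => dist_nonneg) hmle (hasum.add (hbsum.mul_left 2))
  have hcauchy : CauchySeq x := cauchySeq_of_summable_dist hmsum
  obtain ⟨xbar, hxbar⟩ := cauchySeq_tendsto_of_complete hcauchy
  refine ⟨xbar, ?_, hxbar⟩
  rw [Set.mem_iInter]
  intro i
  have hSi : (setOf fun k => sel k = i).Infinite := hsel i
  have hφmem : ∀ n, sel (Nat.nth (fun k => sel k = i) n) = i :=
    fun n => Nat.nth_mem_of_infinite hSi n
  have hφmono : StrictMono (Nat.nth (fun k => sel k = i)) := Nat.nth_strictMono hSi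
  set φ := Nat.nth (fun k => sel k = i) with hφ
  by_cases hi : i ∈ I₀
  · have hmem : ∀ n, x (φ n + 1) ∈ C i := by
      intro n
      have h := (quasiA (φ n) (by rw [hφmem n]; exact hi)).1
      rwa [hφmem n] at h
    have hmono1 : StrictMono (fun n => φ n + 1) := fun m n h => by
      simpa using hφmono h
    have htend : Tendsto (fun n => x (φ n + 1)) atTop (nhds xbar) :=
      hxbar.comp hmono1.tendsto_atTop
    exact (hC i).2.1.mem_of_tendsto htend (Filter.Eventually.of_forall hmem)
  · have hbk : ∀ n, Metric.infDist (x (φ n)) (C i) = b (φ n) := by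
      intro n
      simp only [hb]
      rw [hφmem n, if_neg hi]
    have hbtend : Tendsto (fun n => b (φ n)) atTop (nhds 0) :=
      hbsum.tendsto_atTop_zero.comp hφmono.tendsto_atTop
    have hgtend : Tendsto (fun n => Metric.infDist (x (φ n)) (C i)) atTop
        (nhds (Metric.infDist xbar (C i))) :=
      ((Metric.continuous_infDist_pt (C i)).tendsto xbar).comp
        (hxbar.comp hφmono.tendsto_atTop)
    have h0 : Metric.infDist xbar (C i) = 0 :=
      tendsto_nhds_unique hgtend (hbtend.congr (fun n => (hbk n).symm))
    exact ((hC i).2.1.mem_iff_infDist_zero (hC i).1).mpr h0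
end

section
/- Let X = ℝⁿ, let C₁ be a nonempty closed convex subset of ℝⁿ, and for each i ∈ {2,…,6} let C_i = (Z_i)_{[β_i]} be the β_i-enlargement of a nonempty closed convex set Z_i ⊆ ℝⁿ with β_i > 0. Set T₁ := P_{C₁} and, for i ∈ {2,…,6}, let T_i be the intrepid projector onto C_i with respect to Z_i and β_i. Suppose the strict feasibility condition C₁ ∩ ⋂_{2≤i≤6} int C_i ≠ ∅ holds. Then for any x₀ ∈ ℝⁿ, the cyclic sequence defined by x_{k+1} := T_{(k mod 6)+1} x_k converges to some point of C := C₁ ∩ C₂ ∩ ⋯ ∩ C₆. -/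
open Metric
open scoped RealInnerProductSpace

variable {E : Type*} [NormedAddCommGroup E] [InnerProductSpace ℝ E]

lemma proj_varineq {K : Set E} (hK : Convex ℝ K) {p x : E} (hp : p ∈ K)
    (hd : dist x p = infDist x K) : ∀ w ∈ K, ⟪x - p, w - p⟫ ≤ 0 := by
  rw [← norm_eq_iInf_iff_real_inner_le_zero hK hp]
  rw [dist_eq_norm] at hd
  rw [hd, infDist_eq_iInf]
  exact iInf_congr fun y => dist_eq_norm _ _

lemma proj_firm {K : Set E} (hK : Convex ℝ K) {p x : E} (hp : p ∈ K)
    (hd : dist x p = infDist x K) {c : E} (hc : c ∈ K) :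
    ‖p - c‖ ^ 2 + ‖x - p‖ ^ 2 ≤ ‖x - c‖ ^ 2 := by
  have h := proj_varineq hK hp hd c hc
  have hxc : x - c = (x - p) + (p - c) := by abel
  have hexp := norm_add_sq_real (x - p) (p - c)
  have hneg : ⟪x - p, p - c⟫ = -⟪x - p, c - p⟫ := by
    rw [← inner_neg_right, neg_sub]
  rw [hxc, hexp] at *
  linarith

lemma inner_le_beta {S : Set E} {p x c q : E} {β : ℝ} (hS : Convex ℝ S)
    (hp : p ∈ S) (hd : dist x p = infDist x S)
    (hq : q ∈ S) (hcq : dist c q = infDist c S) (hc : infDist c S ≤ β) :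
    ⟪x - p, c - p⟫ ≤ β * ‖x - p‖ := by
  have h1 : ⟪x - p, q - p⟫ ≤ 0 := proj_varineq hS hp hd q hq
  have h2 : ⟪x - p, c - q⟫ ≤ ‖x - p‖ * ‖c - q‖ := real_inner_le_norm _ _
  have h3 : ‖c - q‖ ≤ β := by rw [← dist_eq_norm, hcq]; exact hc
  have hsp : c - p = (c - q) + (q - p) := by abel
  rw [hsp, inner_add_right]
  nlinarith [norm_nonneg (x - p), norm_nonneg (c - q)]

lemma intrepid_far {S : Set E} {p x c q : E} {β : ℝ} (hS : Convex ℝ S)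
    (hp : p ∈ S) (hd : dist x p = infDist x S)
    (hq : q ∈ S) (hcq : dist c q = infDist c S) (hc : infDist c S ≤ β)
    (hβ : 0 < β) (hfar : 2 * β ≤ ‖x - p‖) :
    ‖p - c‖ ≤ ‖x - c‖ := by
  have hI := inner_le_beta hS hp hd hq hcq hc
  have hxc : x - c = (x - p) + (p - c) := by abel
  have hexp := norm_add_sq_real (x - p) (p - c)
  have hneg : ⟪x - p, p - c⟫ = -⟪x - p, c - p⟫ := by rw [← inner_neg_right, neg_sub]
  have hsq : ‖p - c‖ ^ 2 ≤ ‖x - c‖ ^ 2 := by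
    rw [hxc, hexp]
    nlinarith [norm_nonneg (x - p),
      mul_nonneg (norm_nonneg (x - p)) (by linarith : (0:ℝ) ≤ ‖x - p‖ - 2*β)]
  exact (pow_le_pow_iff_left₀ (norm_nonneg _) (norm_nonneg _) two_ne_zero).mp hsq

lemma intrepid_mid {S : Set E} {p x c q : E} {β : ℝ} (hS : Convex ℝ S)
    (hp : p ∈ S) (hd : dist x p = infDist x S)
    (hq : q ∈ S) (hcq : dist c q = infDist c S) (hc : infDist c S ≤ β)
    (hβ : 0 < β) (h1 : β ≤ ‖x - p‖) (h2 : ‖x - p‖ ≤ 2 * β) :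
    ‖(x + (1 - ‖x - p‖ / β) • (x - p)) - c‖ ≤ ‖x - c‖ := by
  set d := ‖x - p‖ with hdd
  set l : ℝ := 1 - d / β with hldef
  have hd0 : 0 ≤ d := norm_nonneg _
  have hlβ : l * β = β - d := by rw [hldef, sub_mul, div_mul_cancel₀ _ hβ.ne', one_mul]
  have hI : ⟪x - p, c - p⟫ ≤ β * d := inner_le_beta hS hp hd hq hcq hc
  have hI' : d ^ 2 - β * d ≤ ⟪x - c, x - p⟫ := by
    have hsplit : x - c = (x - p) - (c - p) := by abel
    rw [hsplit, inner_sub_left, real_inner_self_eq_norm_sq, real_inner_comm]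
    linarith
  set I := ⟪x - c, x - p⟫ with hIdef
  have hQ : (x + l • (x - p)) - c = (x - c) + l • (x - p) := by
    rw [add_sub_right_comm]
  have hexp : ‖(x - c) + l • (x - p)‖ ^ 2 = ‖x - c‖ ^ 2 + 2 * (l * I) + l ^ 2 * d ^ 2 := by
    rw [norm_add_sq_real, real_inner_smul_right, norm_smul, mul_pow, Real.norm_eq_abs, sq_abs]
  have key : 2 * (l * I) + l ^ 2 * d ^ 2 ≤ 0 := by
    have hββ : (0:ℝ) < β ^ 2 := by positivity
    have expand : (2 * (l * I) + l ^ 2 * d ^ 2) * β ^ 2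
        = 2 * (l * β) * β * I + (l * β) ^ 2 * d ^ 2 := by ring
    have key2 : (2 * (l * I) + l ^ 2 * d ^ 2) * β ^ 2 ≤ 0 := by
      rw [expand, hlβ]
      have t1 : 0 ≤ 2 * β * (d - β) * (I - (d ^ 2 - β * d)) :=
        mul_nonneg (by nlinarith) (by linarith)
      have t2 : 0 ≤ (d - β) ^ 2 * d * (2 * β - d) :=
        mul_nonneg (mul_nonneg (sq_nonneg _) hd0) (by linarith)
      nlinarith [t1, t2]
    nlinarith [key2, hββ]
  have hsq : ‖(x + l • (x - p)) - c‖ ^ 2 ≤ ‖x - c‖ ^ 2 := by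
    rw [hQ, hexp]; linarith
  exact (pow_le_pow_iff_left₀ (norm_nonneg _) (norm_nonneg _) two_ne_zero).mp hsq

lemma intrepid_mid_mem {S : Set E} {p x : E} {β : ℝ}
    (hp : p ∈ S) (hβ : 0 < β) (h2 : ‖x - p‖ ≤ 2 * β) :
    infDist (x + (1 - ‖x - p‖ / β) • (x - p)) S ≤ β := by
  set d := ‖x - p‖ with hdd
  have hd0 : 0 ≤ d := norm_nonneg _
  have hle : infDist (x + (1 - d / β) • (x - p)) S ≤ ‖(x + (1 - d / β) • (x - p)) - p‖ := by
    rw [← dist_eq_norm]; exact infDist_le_dist_of_mem hp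
  have heq : (x + (1 - d / β) • (x - p)) - p = (1 + (1 - d / β)) • (x - p) := by
    rw [add_smul, one_smul, add_sub_right_comm]
  have hnn : (0:ℝ) ≤ 1 + (1 - d / β) := by
    have : d / β ≤ 2 := by rw [div_le_iff₀ hβ]; linarith
    linarith
  have hnorm : ‖(1 + (1 - d / β)) • (x - p)‖ = (1 + (1 - d / β)) * d := by
    rw [norm_smul, Real.norm_eq_abs, abs_of_nonneg hnn]
  have hfin : (1 + (1 - d / β)) * d ≤ β := by
    have hb : (1 + (1 - d / β)) * β = 2 * β - d := by
      field_simp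
      ring
    rw [← mul_le_mul_iff_of_pos_right hβ]
    calc (1 + (1 - d / β)) * d * β = ((1 + (1 - d / β)) * β) * d := by ring
      _ = (2 * β - d) * d := by rw [hb]
      _ ≤ β * β := by nlinarith [sq_nonneg (d - β)]
  calc infDist (x + (1 - d / β) • (x - p)) S ≤ _ := hle
    _ = _ := by rw [heq, hnorm]
    _ ≤ β := hfin

lemma strong_dec {z y w : E} {ε : ℝ} (hε : 0 < ε)
    (h : ∀ u : E, ‖u‖ ≤ ε → ‖w - (z + u)‖ ≤ ‖y - (z + u)‖) :
    ‖w - z‖ ^ 2 + 2 * ε * ‖w - y‖ ≤ ‖y - z‖ ^ 2 := by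
  rcases eq_or_ne w y with rfl | hne
  · have h0 := h 0 (by simp [hε.le])
    simp only [add_zero] at h0
    have := pow_le_pow_left₀ (norm_nonneg _) h0 2
    simp only [sub_self, norm_zero]
    linarith
  · have hyw : (0:ℝ) < ‖y - w‖ := by
      rw [norm_pos_iff, sub_ne_zero]; exact fun hh => hne hh.symm
    set u := (ε / ‖y - w‖) • (y - w) with hu
    have hun : ‖u‖ = ε := by
      rw [hu, norm_smul, Real.norm_eq_abs, abs_of_nonneg (by positivity), div_mul_cancel₀]
      exact hyw.ne'
    have hineq := h u (le_of_eq hun)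
    have hsq := pow_le_pow_left₀ (norm_nonneg _) hineq 2
    have e1 : w - (z + u) = (w - z) - u := by abel
    have e2 : y - (z + u) = (y - z) - u := by abel
    have hA : ‖(w - z) - u‖ ^ 2 = ‖w - z‖ ^ 2 - 2 * ⟪w - z, u⟫ + ‖u‖ ^ 2 :=
      norm_sub_sq_real _ _
    have hB : ‖(y - z) - u‖ ^ 2 = ‖y - z‖ ^ 2 - 2 * ⟪y - z, u⟫ + ‖u‖ ^ 2 :=
      norm_sub_sq_real _ _
    rw [e1, e2, hA, hB] at hsq
    have hip : ⟪y - z, u⟫ - ⟪w - z, u⟫ = ⟪y - w, u⟫ := by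
      rw [← inner_sub_left]; congr 1; abel
    have hyu : ⟪y - w, u⟫ = ε * ‖y - w‖ := by
      rw [hu, real_inner_smul_right, real_inner_self_eq_norm_sq]
      field_simp
    have hnorm_wy : ‖w - y‖ = ‖y - w‖ := norm_sub_rev _ _
    nlinarith [hsq, hip, hyu]
/-- CycIP for the road design problem, strict feasibility.
In `X = ℝⁿ`, let `C 0` be a nonempty closed convex set (interpolation
constraints) with `T 0 := P_{C 0}`, and for `i ≠ 0` let
`C i = (Z i)_[β i]` be an enlargement with `T i` the corresponding intrepid
projector.  If `C 0 ∩ ⋂_{i ≠ 0} int (C i) ≠ ∅`, then from any starting point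
the cyclic sequence `x (k+1) = T (k mod 6) (x k)` converges to some point of
`C := ⋂ i, C i`. -/
theorem cycIP_road_design_convergence
    {n : ℕ}
    (C : Fin 6 → Set (EuclideanSpace ℝ (Fin n)))
    (hC0 : (C 0).Nonempty ∧ IsClosed (C 0) ∧ Convex ℝ (C 0))
    (P0 : EuclideanSpace ℝ (Fin n) → EuclideanSpace ℝ (Fin n))
    (hP0 : ∀ x : EuclideanSpace ℝ (Fin n),
      P0 x ∈ C 0 ∧ dist x (P0 x) = Metric.infDist x (C 0))
    (Z : Fin 6 → Set (EuclideanSpace ℝ (Fin n))) (β : Fin 6 → ℝ)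
    (PZ : Fin 6 → EuclideanSpace ℝ (Fin n) → EuclideanSpace ℝ (Fin n))
    (hZ : ∀ i ≠ (0 : Fin 6), (Z i).Nonempty ∧ IsClosed (Z i) ∧ Convex ℝ (Z i) ∧
      0 < β i ∧ C i = {x : EuclideanSpace ℝ (Fin n) | Metric.infDist x (Z i) ≤ β i} ∧
      ∀ x : EuclideanSpace ℝ (Fin n),
        PZ i x ∈ Z i ∧ dist x (PZ i x) = Metric.infDist x (Z i))
    (T : Fin 6 → EuclideanSpace ℝ (Fin n) → EuclideanSpace ℝ (Fin n))
    (hT0 : ∀ x : EuclideanSpace ℝ (Fin n), T 0 x = P0 x)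
    (hTi : ∀ i ≠ (0 : Fin 6), ∀ x : EuclideanSpace ℝ (Fin n),
      (2 * β i ≤ Metric.infDist x (Z i) → T i x = PZ i x) ∧
      (Metric.infDist x (Z i) ≤ β i → T i x = x) ∧
      (β i < Metric.infDist x (Z i) → Metric.infDist x (Z i) < 2 * β i →
        T i x = x + (1 - Metric.infDist x (Z i) / β i) • (x - PZ i x)))
    (hfeas : (C 0 ∩ ⋂ i ∈ ({0}ᶜ : Set (Fin 6)), interior (C i)).Nonempty)
    (x : ℕ → EuclideanSpace ℝ (Fin n))
    (hx : ∀ k : ℕ, x (k + 1) = T (Fin.ofNat 6 k) (x k)) :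
    ∃ xbar ∈ ⋂ i, C i, Filter.Tendsto x Filter.atTop (nhds xbar) := by
  classical
  obtain ⟨hC0ne, hC0cl, hC0cv⟩ := hC0
  obtain ⟨z, hz0, hzint⟩ := hfeas
  have hzint' : ∀ i : Fin 6, i ≠ 0 → z ∈ interior (C i) := by
    intro i hi
    exact Set.mem_iInter₂.mp hzint i hi
  have hzC : ∀ i, z ∈ C i := by
    intro i
    by_cases hi : i = 0
    · rw [hi]; exact hz0
    · exact interior_subset (hzint' i hi)
  have hCcl : ∀ i, IsClosed (C i) := by
    intro i
    by_cases hi : i = 0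
    · rw [hi]; exact hC0cl
    · obtain ⟨-, -, -, -, hCi, -⟩ := hZ i hi
      rw [hCi]
      exact isClosed_le (Metric.continuous_infDist_pt _) continuous_const
  -- quasi-nonexpansiveness of each operator with respect to its fixed set
  have quasi : ∀ (i : Fin 6) (y c : EuclideanSpace ℝ (Fin n)),
      c ∈ C i → dist (T i y) c ≤ dist y c := by
    intro i y c hc
    by_cases hi : i = 0
    · subst hi
      rw [hT0]
      obtain ⟨hPmem, hPd⟩ := hP0 y
      have hfirm := proj_firm hC0cv hPmem hPd hc
      rw [dist_eq_norm, dist_eq_norm]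
      have hsq : ‖P0 y - c‖ ^ 2 ≤ ‖y - c‖ ^ 2 := by nlinarith [sq_nonneg ‖y - P0 y‖]
      exact (pow_le_pow_iff_left₀ (norm_nonneg _) (norm_nonneg _) two_ne_zero).mp hsq
    · obtain ⟨-, -, hZcv, hβ, hCi, hPZ⟩ := hZ i hi
      obtain ⟨hTfar, hTfix, hTmid⟩ := hTi i hi y
      have hcC : Metric.infDist c (Z i) ≤ β i := by rw [hCi] at hc; exact hc
      obtain ⟨hpy, hdy⟩ := hPZ y
      obtain ⟨hqc, hdc⟩ := hPZ c
      have hnd : ‖y - PZ i y‖ = Metric.infDist y (Z i) := by rw [← dist_eq_norm, hdy]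
      rcases le_or_gt (Metric.infDist y (Z i)) (β i) with hle | hgt
      · rw [hTfix hle]
      rcases le_or_gt (2 * β i) (Metric.infDist y (Z i)) with hfar | hmid
      · rw [hTfar hfar, dist_eq_norm, dist_eq_norm]
        exact intrepid_far hZcv hpy hdy hqc hdc hcC hβ (by rw [hnd]; exact hfar)
      · rw [hTmid hgt hmid, dist_eq_norm, dist_eq_norm, ← hnd]
        exact intrepid_mid hZcv hpy hdy hqc hdc hcC hβ
          (by rw [hnd]; exact hgt.le) (by rw [hnd]; exact hmid.le)
  -- range of each operator
  have memT : ∀ (i : Fin 6) (y : EuclideanSpace ℝ (Fin n)), T i y ∈ C i := by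
    intro i y
    by_cases hi : i = 0
    · subst hi; rw [hT0]; exact (hP0 y).1
    · obtain ⟨-, -, hZcv, hβ, hCi, hPZ⟩ := hZ i hi
      obtain ⟨hTfar, hTfix, hTmid⟩ := hTi i hi y
      obtain ⟨hpy, hdy⟩ := hPZ y
      have hnd : ‖y - PZ i y‖ = Metric.infDist y (Z i) := by rw [← dist_eq_norm, hdy]
      rw [hCi]
      rcases le_or_gt (Metric.infDist y (Z i)) (β i) with hle | hgt
      · rw [hTfix hle]; exact hle
      rcases le_or_gt (2 * β i) (Metric.infDist y (Z i)) with hfar | hmid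
      · rw [hTfar hfar]
        show Metric.infDist (PZ i y) (Z i) ≤ β i
        rw [Metric.infDist_zero_of_mem hpy]
        exact hβ.le
      · rw [hTmid hgt hmid]
        show Metric.infDist _ (Z i) ≤ β i
        rw [← hnd]
        exact intrepid_mid_mem hpy hβ (by rw [hnd]; exact hmid.le)
  have memx : ∀ k : ℕ, x (k + 1) ∈ C (Fin.ofNat 6 k) := by
    intro k; rw [hx]; exact memT _ _
  have mono : ∀ (k : ℕ) (c : EuclideanSpace ℝ (Fin n)), (∀ i, c ∈ C i) →
      dist (x (k + 1)) c ≤ dist (x k) c := by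
    intro k c hc; rw [hx]; exact quasi _ _ _ (hc _)
  -- a uniform ball around z inside every C i, i ≠ 0
  have hUopen : IsOpen (⋂ i ∈ ({0}ᶜ : Set (Fin 6)), interior (C i)) :=
    Set.Finite.isOpen_biInter (Set.toFinite _) (fun i _ => isOpen_interior)
  obtain ⟨ε₀, hε₀, hball₀⟩ := Metric.isOpen_iff.mp hUopen z hzint
  set ε : ℝ := ε₀ / 2 with hεdef
  have hε : 0 < ε := by positivity
  have hball : ∀ i : Fin 6, i ≠ 0 → ∀ u : EuclideanSpace ℝ (Fin n), ‖u‖ ≤ ε → z + u ∈ C i := by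
    intro i hi u hu
    have hmem : z + u ∈ Metric.ball z ε₀ := by
      rw [Metric.mem_ball, dist_eq_norm, add_sub_cancel_left]
      calc ‖u‖ ≤ ε₀ / 2 := hu
        _ < ε₀ := by linarith
    exact interior_subset (Set.mem_iInter₂.mp (hball₀ hmem) i hi)
  set r : ℕ → ℝ := fun k => dist (x k) z with hrdef
  have hr_anti' : ∀ k, r (k + 1) ≤ r k := fun k => mono k z hzC
  have hr_anti : Antitone r := antitone_nat_of_succ_le hr_anti'
  set δ : ℕ → ℝ := fun k => r k ^ 2 - r (k + 1) ^ 2 with hδdef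
  have hδ0 : ∀ k, 0 ≤ δ k := by
    intro k
    have h1 := hr_anti' k
    have h2 : (0:ℝ) ≤ r (k + 1) := dist_nonneg
    simp only [hδdef]
    nlinarith
  -- key per-step estimate
  have key : ∀ k : ℕ, dist (x (k + 1)) (x k) ≤ Real.sqrt (δ k) + δ k / (2 * ε) := by
    intro k
    by_cases hk : Fin.ofNat 6 k = 0
    · have hx' : x (k + 1) = P0 (x k) := by rw [hx, hk, hT0]
      obtain ⟨hm, hd⟩ := hP0 (x k)
      have hfirm := proj_firm hC0cv hm hd (hz0)
      have h1 : dist (x (k + 1)) (x k) ^ 2 ≤ δ k := by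
        simp only [hδdef, hrdef]
        rw [hx', dist_eq_norm, dist_eq_norm, dist_eq_norm, norm_sub_rev]
        nlinarith
      have h2 : dist (x (k + 1)) (x k) ≤ Real.sqrt (δ k) := by
        have := Real.sqrt_le_sqrt h1
        rwa [Real.sqrt_sq dist_nonneg] at this
      have h3 : 0 ≤ δ k / (2 * ε) := div_nonneg (hδ0 k) (by positivity)
      linarith
    · have hquasi : ∀ u : EuclideanSpace ℝ (Fin n), ‖u‖ ≤ ε →
          ‖x (k + 1) - (z + u)‖ ≤ ‖x k - (z + u)‖ := by
        intro u hu
        rw [← dist_eq_norm, ← dist_eq_norm]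
        exact hx k ▸ quasi _ _ _ (hball _ hk u hu)
      have hs := strong_dec hε hquasi
      have h1 : 2 * ε * dist (x (k + 1)) (x k) ≤ δ k := by
        simp only [hδdef, hrdef]
        rw [dist_eq_norm, dist_eq_norm, dist_eq_norm]
        nlinarith
      have h2 : dist (x (k + 1)) (x k) ≤ δ k / (2 * ε) := by
        rw [le_div_iff₀ (by positivity)]
        linarith
      have h3 : 0 ≤ Real.sqrt (δ k) := Real.sqrt_nonneg _
      linarith
  -- the squared distances to z converge, hence δ → 0
  have hrbdd : BddBelow (Set.range r) := ⟨0, by rintro - ⟨k, rfl⟩; exact dist_nonneg⟩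
  have hrtend : Filter.Tendsto r Filter.atTop (nhds (⨅ k, r k)) :=
    tendsto_atTop_ciInf hr_anti hrbdd
  have hr2tend : Filter.Tendsto (fun k => r k ^ 2) Filter.atTop (nhds ((⨅ k, r k) ^ 2)) :=
    hrtend.pow 2
  have hr2shift : Filter.Tendsto (fun k => r (k + 1) ^ 2) Filter.atTop
      (nhds ((⨅ k, r k) ^ 2)) := by
    exact (Filter.tendsto_add_atTop_iff_nat 1).mpr hr2tend
  have hδtend : Filter.Tendsto δ Filter.atTop (nhds 0) := by
    have := hr2tend.sub hr2shift
    simpa using this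
  have hdtend : Filter.Tendsto (fun k => dist (x (k + 1)) (x k)) Filter.atTop (nhds 0) := by
    have hb : Filter.Tendsto (fun k => Real.sqrt (δ k) + δ k / (2 * ε)) Filter.atTop
        (nhds 0) := by
      have h1 : Filter.Tendsto (fun k => Real.sqrt (δ k)) Filter.atTop (nhds 0) := by
        have := (Real.continuous_sqrt.tendsto' 0 0 Real.sqrt_zero).comp hδtend
        exact this
      have h2 : Filter.Tendsto (fun k => δ k / (2 * ε)) Filter.atTop (nhds 0) := by
        simpa using hδtend.div_const (2 * ε)
      simpa using h1.add h2
    exact squeeze_zero (fun k => dist_nonneg) key hb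
  -- bounded orbit: extract a convergent subsequence
  have hbd : ∀ k, x k ∈ Metric.closedBall z (r 0) := by
    intro k
    rw [Metric.mem_closedBall]
    exact hr_anti (Nat.zero_le k)
  obtain ⟨xbar, -, φ, hφ, hxφ⟩ :=
    tendsto_subseq_of_bounded Metric.isBounded_closedBall hbd
  have hφtop : Filter.Tendsto φ Filter.atTop Filter.atTop := hφ.tendsto_atTop
  have hxφdist : Filter.Tendsto (fun j => dist (x (φ j)) xbar) Filter.atTop (nhds 0) :=
    tendsto_iff_dist_tendsto_zero.mp hxφ
  -- the cluster point lies in every C i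
  have hclust : ∀ i, xbar ∈ C i := by
    intro i
    set t : ℕ → ℕ := fun j => (i.val + 6 - (φ j) % 6) % 6 with htdef
    have ht6 : ∀ j, t j < 6 := fun j => Nat.mod_lt _ (by norm_num)
    have hmod : ∀ j, Fin.ofNat 6 (φ j + t j) = i := by
      intro j
      apply Fin.ext
      rw [Fin.val_ofNat]
      have h1 : (φ j) % 6 < 6 := Nat.mod_lt _ (by norm_num)
      have h2 : i.val < 6 := i.isLt
      simp only [htdef]
      omega
    have hyC : ∀ j, x (φ j + t j + 1) ∈ C i := by
      intro j
      have := memx (φ j + t j)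
      rwa [hmod j] at this
    have gen : ∀ (a m : ℕ), dist (x (a + m)) (x a) ≤
        ∑ s ∈ Finset.range m, dist (x (a + s + 1)) (x (a + s)) := by
      intro a m
      induction m with
      | zero => simp
      | succ m ih =>
        rw [Finset.sum_range_succ]
        have htri : dist (x (a + (m + 1))) (x a) ≤
            dist (x (a + m + 1)) (x (a + m)) + dist (x (a + m)) (x a) := by
          rw [show a + (m + 1) = a + m + 1 by ring]
          exact dist_triangle _ _ _
        linarith
    have hb : ∀ j, dist (x (φ j + t j + 1)) (x (φ j)) ≤
        ∑ s ∈ Finset.range 6, dist (x (φ j + s + 1)) (x (φ j + s)) := by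
      intro j
      have h1 : dist (x (φ j + (t j + 1))) (x (φ j)) ≤
          ∑ s ∈ Finset.range (t j + 1), dist (x (φ j + s + 1)) (x (φ j + s)) := gen _ _
      rw [show φ j + (t j + 1) = φ j + t j + 1 by ring] at h1
      refine h1.trans (Finset.sum_le_sum_of_subset_of_nonneg
        (Finset.range_subset_range.mpr (ht6 j)) (fun _ _ _ => dist_nonneg))
    have hsum0 : Filter.Tendsto
        (fun j => ∑ s ∈ Finset.range 6, dist (x (φ j + s + 1)) (x (φ j + s)))
        Filter.atTop (nhds 0) := by
      have hterm : ∀ s : ℕ, Filter.Tendsto (fun j => dist (x (φ j + s + 1)) (x (φ j + s)))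
          Filter.atTop (nhds 0) := by
        intro s
        have hshift : Filter.Tendsto (fun j => φ j + s) Filter.atTop Filter.atTop :=
          Filter.tendsto_atTop_mono (fun j => Nat.le_add_right _ _) hφtop
        exact hdtend.comp hshift
      have := tendsto_finset_sum (Finset.range 6)
        (fun s _ => hterm s)
      simpa using this
    have hy : Filter.Tendsto (fun j => x (φ j + t j + 1)) Filter.atTop (nhds xbar) := by
      rw [tendsto_iff_dist_tendsto_zero]
      have hbound : ∀ j, dist (x (φ j + t j + 1)) xbar ≤
          (∑ s ∈ Finset.range 6, dist (x (φ j + s + 1)) (x (φ j + s)))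
            + dist (x (φ j)) xbar := by
        intro j
        calc dist (x (φ j + t j + 1)) xbar
            ≤ dist (x (φ j + t j + 1)) (x (φ j)) + dist (x (φ j)) xbar :=
              dist_triangle _ _ _
          _ ≤ _ := by linarith [hb j]
      have hlim := hsum0.add hxφdist
      rw [add_zero] at hlim
      exact squeeze_zero (fun j => dist_nonneg) hbound hlim
    exact (hCcl i).mem_of_tendsto hy (Filter.Eventually.of_forall hyC)
  -- FejĂ©r monotonicity yields convergence of the whole sequence
  refine ⟨xbar, Set.mem_iInter.mpr hclust, ?_⟩
  have hanti : Antitone (fun k => dist (x k) xbar) :=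
    antitone_nat_of_succ_le (fun k => mono k xbar hclust)
  rw [Metric.tendsto_atTop]
  intro ε' hε'
  obtain ⟨J, hJ⟩ := (Metric.tendsto_atTop.mp hxφ) ε' hε'
  refine ⟨φ J, fun m hm => ?_⟩
  have h1 : dist (x m) xbar ≤ dist (x (φ J)) xbar := hanti hm
  have h2 : dist ((x ∘ φ) J) xbar < ε' := hJ J le_rfl
  exact lt_of_le_of_lt h1 h2
end
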